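/- arXiv:1109.0306 — 4 statements merged into one kernel-verified Lean document; each statement's English description precedes it below -/
import Mathlib

section
/- Let n ≥ 1 and p > 1, and let w be a weight on ℂⁿ. If w ∈ A_{p,r} for some r > 0, then w ∈ A_{p,r'} for every r' > 0; that is, the classes A_{p,r} coincide for all r > 0. -/
open MeasureTheory ENNReal Metric

noncomputable section

/-- We identify `ℂⁿ` with `ℝ^{2n}` equipped with Lebesgue measure. -/
abbrev En (n : ℕ) := EuclideanSpace ℂ (Fin n)

instance (n : ℕ) : MeasurableSpace (En n) := borel _
instance (n : ℕ) : BorelSpace (En n) := ⟨rfl⟩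
instance (n : ℕ) : InnerProductSpace ℝ (En n) := InnerProductSpace.complexToReal

/-- The axis-parallel cube with center `z` and side length `r`. -/
def cube (n : ℕ) (r : ℝ) (z : En n) : Set (En n) :=
  {u | ∀ j, |(u j).re - (z j).re| ≤ r / 2 ∧ |(u j).im - (z j).im| ≤ r / 2}

/-- A weight on `ℂⁿ`: measurable, positive a.e. and locally integrable. -/
def IsWeight (n : ℕ) (w : En n → ℝ) : Prop :=
  Measurable w ∧ (∀ᵐ z : En n, 0 < w z) ∧ LocallyIntegrable w volume

/-- The restricted Muckenhoupt condition `A_{p,r}`. -/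
def MemApr (n : ℕ) (p r : ℝ) (w : En n → ℝ) : Prop :=
  ∃ C : ℝ, ∀ z : En n,
    ((volume (cube n r z))⁻¹ * ∫⁻ u in cube n r z, ENNReal.ofReal (w u)) *
      ((volume (cube n r z))⁻¹ *
        ∫⁻ u in cube n r z, ENNReal.ofReal (w u ^ (-(1 / (p - 1))))) ^ (p - 1)
      ≤ ENNReal.ofReal C

namespace AprAux

open Pointwise

variable {n : ℕ}

lemma cube_subset {a b : ℝ} (h : a ≤ b) (z : En n) : cube n a z ⊆ cube n b z := by
  intro u hu j
  obtain ⟨h1, h2⟩ := hu j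
  constructor <;> linarith

lemma isClosed_cube (r : ℝ) (z : En n) : IsClosed (cube n r z) := by
  have : cube n r z =
      ⋂ j, ({u : En n | |(u j).re - (z j).re| ≤ r / 2} ∩
        {u : En n | |(u j).im - (z j).im| ≤ r / 2}) := by
    ext u; simp [cube, Set.mem_iInter, forall_and]
  rw [this]
  refine isClosed_iInter fun j => IsClosed.inter ?_ ?_
  · exact isClosed_le (Continuous.abs ((Complex.continuous_re.comp
      (PiLp.proj (𝕜 := ℂ) 2 (fun _ : Fin n => ℂ) j).continuous).sub continuous_const))
      continuous_const
  · exact isClosed_le (Continuous.abs ((Complex.continuous_im.comp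
      (PiLp.proj (𝕜 := ℂ) 2 (fun _ : Fin n => ℂ) j).continuous).sub continuous_const))
      continuous_const

lemma measurableSet_cube (r : ℝ) (z : En n) : MeasurableSet (cube n r z) :=
  (isClosed_cube r z).measurableSet

lemma cube_subset_closedBall (r : ℝ) (z : En n) :
    cube n r z ⊆ Metric.closedBall z (Real.sqrt (n * r ^ 2)) := by
  intro u hu
  rw [Metric.mem_closedBall, dist_eq_norm]
  have hnorm : ‖u - z‖ = Real.sqrt (∑ j, ‖(u - z) j‖ ^ 2) := EuclideanSpace.norm_eq _
  rw [hnorm]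
  apply Real.sqrt_le_sqrt
  have : ∀ j, ‖(u - z) j‖ ^ 2 ≤ r ^ 2 := by
    intro j
    obtain ⟨h1, h2⟩ := hu j
    have hj : (u - z) j = u j - z j := by simp
    have habs : ‖u j - z j‖ ≤ |(u j - z j).re| + |(u j - z j).im| :=
      Complex.norm_le_abs_re_add_abs_im _
    have hre : (u j - z j).re = (u j).re - (z j).re := by simp
    have him : (u j - z j).im = (u j).im - (z j).im := by simp
    have h3 : ‖(u - z) j‖ ≤ |r| := by
      rw [hj]
      calc ‖u j - z j‖ ≤ |(u j - z j).re| + |(u j - z j).im| := habs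
        _ ≤ r / 2 + r / 2 := by rw [hre, him]; exact add_le_add h1 h2
        _ ≤ |r| := by have := le_abs_self r; linarith
    calc ‖(u - z) j‖ ^ 2 ≤ |r| ^ 2 := by
          apply sq_le_sq' <;> [linarith [norm_nonneg ((u - z) j)]; exact h3]
      _ = r ^ 2 := sq_abs r
  calc (∑ j, ‖(u - z) j‖ ^ 2) ≤ ∑ _j : Fin n, r ^ 2 := Finset.sum_le_sum fun j _ => this j
    _ = n * r ^ 2 := by simp [mul_comm]

lemma ball_subset_cube {r : ℝ} (hr : 0 < r) (z : En n) :
    Metric.ball z (r / 2) ⊆ cube n r z := by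
  intro u hu j
  rw [Metric.mem_ball, dist_eq_norm] at hu
  have hj : ‖(u - z) j‖ ≤ ‖u - z‖ := by
    rw [EuclideanSpace.norm_eq]
    have h1 : ‖(u - z) j‖ ^ 2 ≤ ∑ i, ‖(u - z) i‖ ^ 2 :=
      Finset.single_le_sum (f := fun i => ‖(u - z) i‖ ^ 2) (fun i _ => sq_nonneg _)
        (Finset.mem_univ j)
    calc ‖(u - z) j‖ = Real.sqrt (‖(u - z) j‖ ^ 2) := by rw [Real.sqrt_sq (norm_nonneg _)]
      _ ≤ _ := Real.sqrt_le_sqrt h1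
  have hj2 : (u - z) j = u j - z j := by simp
  have hre : |(u j).re - (z j).re| ≤ ‖u j - z j‖ := by
    have := Complex.abs_re_le_norm (u j - z j)
    simpa using this
  have him : |(u j).im - (z j).im| ≤ ‖u j - z j‖ := by
    have := Complex.abs_im_le_norm (u j - z j)
    simpa using this
  rw [hj2] at hj
  constructor <;> [linarith; linarith]

lemma volume_cube_translate (r : ℝ) (z : En n) :
    volume (cube n r z) = volume (cube n r 0) := by
  have : cube n r z = (fun u => u + (-z)) ⁻¹' cube n r 0 := by
    ext u
    simp only [Set.mem_preimage, cube, Set.mem_setOf_eq]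
    constructor <;> intro h j <;> have := h j <;> simpa [sub_eq_add_neg] using this
  rw [this, measure_preimage_add_right]

lemma cube_smul {c r : ℝ} (hc : 0 < c) :
    cube n (c * r) (0 : En n) = c • cube n r (0 : En n) := by
  have key : ∀ x : ℝ, |c⁻¹ * x| ≤ r / 2 ↔ |x| ≤ c * r / 2 := by
    intro x
    rw [abs_mul, abs_inv, abs_of_pos hc, inv_mul_le_iff₀ hc]
    constructor <;> intro <;> nlinarith
  ext u
  rw [Set.mem_smul_set_iff_inv_smul_mem₀ (ne_of_gt hc)]
  simp only [cube, Set.mem_setOf_eq]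
  constructor <;> intro h j <;> obtain ⟨h1, h2⟩ := h j <;>
    simp only [PiLp.smul_apply, Complex.real_smul, Complex.mul_re, Complex.mul_im,
      Complex.ofReal_re, Complex.ofReal_im, Complex.zero_re, Complex.zero_im,
      PiLp.zero_apply, sub_zero, zero_mul, mul_zero, zero_sub, add_zero, zero_add,
      neg_zero] at * <;>
    constructor
  · exact (key _).2 h1
  · exact (key _).2 h2
  · exact (key _).1 h1
  · exact (key _).1 h2


lemma volume_cube_eq {r : ℝ} (hr : 0 < r) (z : En n) :
    volume (cube n r z) =
      ENNReal.ofReal r ^ Module.finrank ℝ (En n) * volume (cube n 1 (0 : En n)) := by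
  rw [volume_cube_translate]
  have h1 : cube n r (0 : En n) = r • cube n 1 (0 : En n) := by
    rw [← cube_smul hr, mul_one]
  rw [h1, Measure.addHaar_smul]
  congr 1
  rw [abs_of_nonneg (pow_nonneg hr.le _), ENNReal.ofReal_pow hr.le]

lemma volume_cube_ne_top (r : ℝ) (z : En n) : volume (cube n r z) ≠ ⊤ := by
  refine ne_of_lt (lt_of_le_of_lt (measure_mono (cube_subset_closedBall r z)) ?_)
  exact measure_closedBall_lt_top

lemma volume_cube_pos {r : ℝ} (hr : 0 < r) (z : En n) : 0 < volume (cube n r z) :=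
  lt_of_lt_of_le (measure_ball_pos volume z (by linarith)) (measure_mono (ball_subset_cube hr z))

lemma volume_cube_ne_zero {r : ℝ} (hr : 0 < r) (z : En n) : volume (cube n r z) ≠ 0 :=
  (volume_cube_pos hr z).ne'


/-- Corner shifts used to cover a cube of side `2r` by `4^n` cubes of side `r`. -/
def shift (n : ℕ) (r : ℝ) (ε : Fin n → Bool × Bool) : En n :=
  WithLp.toLp 2 (fun j => Complex.mk ((if (ε j).1 then 1 else -1) * (r / 2))
    ((if (ε j).2 then 1 else -1) * (r / 2)))

lemma shift_re (r : ℝ) (ε : Fin n → Bool × Bool) (j : Fin n) :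
    (shift n r ε j).re = (if (ε j).1 then 1 else -1) * (r / 2) := rfl

lemma shift_im (r : ℝ) (ε : Fin n → Bool × Bool) (j : Fin n) :
    (shift n r ε j).im = (if (ε j).2 then 1 else -1) * (r / 2) := rfl

lemma abs_shift_re (r : ℝ) (hr : 0 ≤ r) (ε : Fin n → Bool × Bool) (j : Fin n) :
    |(shift n r ε j).re| ≤ r / 2 := by
  rw [shift_re]; split <;> rw [abs_mul] <;> simp [abs_of_nonneg (by linarith : (0:ℝ) ≤ r / 2)]

lemma abs_shift_im (r : ℝ) (hr : 0 ≤ r) (ε : Fin n → Bool × Bool) (j : Fin n) :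
    |(shift n r ε j).im| ≤ r / 2 := by
  rw [shift_im]; split <;> rw [abs_mul] <;> simp [abs_of_nonneg (by linarith : (0:ℝ) ≤ r / 2)]

lemma cube_two_subset {r : ℝ} (hr : 0 ≤ r) (z : En n) :
    cube n (2 * r) z ⊆ ⋃ ε : Fin n → Bool × Bool, cube n r (z + shift n r ε) := by
  intro u hu
  rw [Set.mem_iUnion]
  set ε : Fin n → Bool × Bool :=
    fun j => (decide (0 ≤ (u j).re - (z j).re), decide (0 ≤ (u j).im - (z j).im)) with hε
  refine ⟨ε, ?_⟩
  intro j
  obtain ⟨h1, h2⟩ := hu j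
  have key : ∀ x : ℝ, |x| ≤ 2 * r / 2 →
      |x - (if 0 ≤ x then (1:ℝ) else -1) * (r / 2)| ≤ r / 2 := by
    intro x hx
    rw [abs_le] at hx
    by_cases h : 0 ≤ x
    · rw [if_pos h, abs_le]; constructor <;> linarith
    · rw [if_neg h, abs_le]; constructor <;> linarith
  constructor
  · have e1 : ((z + shift n r ε) j).re
        = (z j).re + (if 0 ≤ (u j).re - (z j).re then (1:ℝ) else -1) * (r / 2) := by
      simp [shift_re, hε]
    rw [e1]
    have := key ((u j).re - (z j).re) h1
    convert this using 2
    ring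
  · have e2 : ((z + shift n r ε) j).im
        = (z j).im + (if 0 ≤ (u j).im - (z j).im then (1:ℝ) else -1) * (r / 2) := by
      simp [shift_im, hε]
    rw [e2]
    have := key ((u j).im - (z j).im) h2
    convert this using 2
    ring

lemma overlap_subset {r : ℝ} (z t : En n)
    (ht : ∀ j, |(t j).re| ≤ r / 2 ∧ |(t j).im| ≤ r / 2) :
    cube n (r / 2) (z + (2⁻¹ : ℝ) • t) ⊆ cube n r z ∩ cube n r (z + t) := by
  intro u hu
  have key : ∀ x c s : ℝ, |s| ≤ r / 2 → |x - (c + 2⁻¹ * s)| ≤ r / 2 / 2 →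
      |x - c| ≤ r / 2 ∧ |x - (c + s)| ≤ r / 2 := by
    intro x c s hs hx
    rw [abs_le] at hs hx ⊢
    rw [abs_le]
    constructor <;> constructor <;> linarith
  constructor <;> intro j <;> obtain ⟨h1, h2⟩ := hu j <;>
      obtain ⟨ht1, ht2⟩ := ht j
  · have e1 : ((z + (2⁻¹ : ℝ) • t) j).re = (z j).re + 2⁻¹ * (t j).re := by
      simp [Complex.real_smul]
    have e2 : ((z + (2⁻¹ : ℝ) • t) j).im = (z j).im + 2⁻¹ * (t j).im := by
      simp [Complex.real_smul]
    rw [e1] at h1; rw [e2] at h2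
    exact ⟨((key _ _ _ ht1 h1).1), ((key _ _ _ ht2 h2).1)⟩
  · have e1 : ((z + (2⁻¹ : ℝ) • t) j).re = (z j).re + 2⁻¹ * (t j).re := by
      simp [Complex.real_smul]
    have e2 : ((z + (2⁻¹ : ℝ) • t) j).im = (z j).im + 2⁻¹ * (t j).im := by
      simp [Complex.real_smul]
    have e3 : ((z + t) j).re = (z j).re + (t j).re := by simp
    have e4 : ((z + t) j).im = (z j).im + (t j).im := by simp
    rw [e1] at h1; rw [e2] at h2; rw [e3, e4]
    exact ⟨((key _ _ _ ht1 h1).2), ((key _ _ _ ht2 h2).2)⟩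


/-! ### Analytic part -/

def IsWeight' (n : ℕ) (w : En n → ℝ) : Prop :=
  Measurable w ∧ (∀ᵐ z : En n, 0 < w z)

def Wt (n : ℕ) (w : En n → ℝ) (s : Set (En n)) : ℝ≥0∞ :=
  ∫⁻ u in s, ENNReal.ofReal (w u)

def St (n : ℕ) (p : ℝ) (w : En n → ℝ) (s : Set (En n)) : ℝ≥0∞ :=
  ∫⁻ u in s, ENNReal.ofReal (w u ^ (-(1 / (p - 1))))

/-- unnormalized form of the `A_{p,r}` condition -/
def Pw (n : ℕ) (p : ℝ) (w : En n → ℝ) (ρ : ℝ) (K : ℝ≥0∞) : Prop :=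
  ∀ z : En n,
    Wt n w (cube n ρ z) * St n p w (cube n ρ z) ^ (p - 1) ≤ K * volume (cube n ρ z) ^ p

lemma Wt_mono {w : En n → ℝ} {s t : Set (En n)} (h : s ⊆ t) : Wt n w s ≤ Wt n w t :=
  lintegral_mono_set h

lemma St_mono {p : ℝ} {w : En n → ℝ} {s t : Set (En n)} (h : s ⊆ t) :
    St n p w s ≤ St n p w t :=
  lintegral_mono_set h

lemma avg_eq {p : ℝ} (V X Y : ℝ≥0∞) (hV0 : V ≠ 0) (hVt : V ≠ ⊤) (hp : 1 < p) :
    (V⁻¹ * X) * (V⁻¹ * Y) ^ (p - 1) = V⁻¹ ^ p * (X * Y ^ (p - 1)) := by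
  rw [ENNReal.mul_rpow_of_nonneg _ _ (by linarith : (0:ℝ) ≤ p - 1)]
  have h1 : V⁻¹ * V⁻¹ ^ (p - 1) = V⁻¹ ^ p := by
    nth_rewrite 1 [← ENNReal.rpow_one V⁻¹]
    rw [← ENNReal.rpow_add _ _ (ENNReal.inv_ne_zero.2 hVt) (ENNReal.inv_ne_top.2 hV0)]
    norm_num
  calc (V⁻¹ * X) * (V⁻¹ ^ (p - 1) * Y ^ (p - 1))
      = (V⁻¹ * V⁻¹ ^ (p - 1)) * (X * Y ^ (p - 1)) := by ring
    _ = _ := by rw [h1]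

lemma inv_rpow_mul_rpow {p : ℝ} (hp : 0 ≤ p) (V : ℝ≥0∞) (hV0 : V ≠ 0) (hVt : V ≠ ⊤) :
    V⁻¹ ^ p * V ^ p = 1 := by
  rw [← ENNReal.mul_rpow_of_nonneg _ _ hp, ENNReal.inv_mul_cancel hV0 hVt, ENNReal.one_rpow]

/-- Hölder inequality: `|E| ≤ W(E)^{1/p} S(E)^{1/q}`. -/
lemma holder {p : ℝ} {w : En n → ℝ} (hw : IsWeight' n w) (hp : 1 < p) (E : Set (En n)) :
    volume E ≤ Wt n w E ^ (1 / p) * St n p w E ^ ((p - 1) / p) := by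
  have hp0 : (0:ℝ) < p := lt_trans one_pos hp
  have hp1 : (0:ℝ) < p - 1 := by linarith
  have hq0 : (0:ℝ) < p / (p - 1) := div_pos hp0 hp1
  have hpq : p.HolderConjugate (p / (p - 1)) := Real.HolderConjugate.conjExponent hp
  have hw1 : Measurable w := hw.1
  have hf : Measurable fun u => ENNReal.ofReal (w u) ^ (1 / p) := by measurability
  have hg : Measurable fun u =>
      ENNReal.ofReal (w u ^ (-(1 / (p - 1)))) ^ (1 / (p / (p - 1))) := by measurability
  have key : (fun _ : En n => (1:ℝ≥0∞)) =ᵐ[volume.restrict E]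
      fun u => ENNReal.ofReal (w u) ^ (1 / p) *
        ENNReal.ofReal (w u ^ (-(1 / (p - 1)))) ^ (1 / (p / (p - 1))) := by
    filter_upwards [ae_restrict_of_ae hw.2] with u hu
    have ha0 : ENNReal.ofReal (w u) ≠ 0 := (ENNReal.ofReal_pos.2 hu).ne'
    have hat : ENNReal.ofReal (w u) ≠ ⊤ := ENNReal.ofReal_ne_top
    have hg1 : ENNReal.ofReal (w u ^ (-(1 / (p - 1))))
        = ENNReal.ofReal (w u) ^ (-(1 / (p - 1))) := (ENNReal.ofReal_rpow_of_pos hu).symm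
    have hexp : -(1 / (p - 1)) * (1 / (p / (p - 1))) = -(1 / p) := by
      rw [one_div_div]
      field_simp
    rw [hg1, ← ENNReal.rpow_mul, hexp,
      ← ENNReal.rpow_add _ _ ha0 hat]
    norm_num
  have H := ENNReal.lintegral_mul_le_Lp_mul_Lq (volume.restrict E) hpq
    hf.aemeasurable hg.aemeasurable
  have e1 : (∫⁻ u in E, (ENNReal.ofReal (w u) ^ (1 / p)) ^ p) = Wt n w E := by
    refine lintegral_congr fun u => ?_
    rw [← ENNReal.rpow_mul, one_div, inv_mul_cancel₀ hp0.ne', ENNReal.rpow_one]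
  have e2 : (∫⁻ u in E, (ENNReal.ofReal (w u ^ (-(1 / (p - 1)))) ^ (1 / (p / (p - 1)))) ^
      (p / (p - 1))) = St n p w E := by
    refine lintegral_congr fun u => ?_
    rw [← ENNReal.rpow_mul, one_div_mul_cancel hq0.ne', ENNReal.rpow_one]
  have e3 : 1 / (p / (p - 1)) = (p - 1) / p := one_div_div _ _
  calc volume E = ∫⁻ _ in E, 1 := (setLIntegral_one E).symm
    _ = ∫⁻ u in E, (fun u => ENNReal.ofReal (w u) ^ (1 / p)) u *
        (fun u => ENNReal.ofReal (w u ^ (-(1 / (p - 1)))) ^ (1 / (p / (p - 1)))) u :=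
      lintegral_congr_ae key
    _ ≤ (∫⁻ u in E, (ENNReal.ofReal (w u) ^ (1 / p)) ^ p) ^ (1 / p) *
        (∫⁻ u in E, (ENNReal.ofReal (w u ^ (-(1 / (p - 1)))) ^ (1 / (p / (p - 1)))) ^
          (p / (p - 1))) ^ (1 / (p / (p - 1))) := H
    _ = Wt n w E ^ (1 / p) * St n p w E ^ ((p - 1) / p) := by rw [e1, e2, e3]


/-- Subset estimate for `W`. -/
lemma est_W {p : ℝ} {w : En n → ℝ} (hw : IsWeight' n w) (hp : 1 < p)
    {Q E : Set (En n)} {M : ℝ≥0∞} (hz : Wt n w Q * St n p w Q ^ (p - 1) ≤ M)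
    (hE : E ⊆ Q) :
    Wt n w Q * volume E ^ p ≤ M * Wt n w E := by
  have hp0 : (0:ℝ) < p := lt_trans one_pos hp
  have h2 : volume E ^ p ≤ Wt n w E * St n p w E ^ (p - 1) := by
    calc volume E ^ p ≤ (Wt n w E ^ (1 / p) * St n p w E ^ ((p - 1) / p)) ^ p :=
          ENNReal.rpow_le_rpow (holder hw hp E) hp0.le
      _ = Wt n w E * St n p w E ^ (p - 1) := by
          rw [ENNReal.mul_rpow_of_nonneg _ _ hp0.le, ← ENNReal.rpow_mul, ← ENNReal.rpow_mul,
            one_div_mul_cancel hp0.ne', ENNReal.rpow_one, div_mul_cancel₀ _ hp0.ne']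
  calc Wt n w Q * volume E ^ p ≤ Wt n w Q * (Wt n w E * St n p w E ^ (p - 1)) :=
        mul_le_mul_right h2 _
    _ ≤ Wt n w Q * (Wt n w E * St n p w Q ^ (p - 1)) := by
        exact mul_le_mul_right (mul_le_mul_right
          (ENNReal.rpow_le_rpow (St_mono hE) (by linarith)) _) _
    _ = Wt n w E * (Wt n w Q * St n p w Q ^ (p - 1)) := by ring
    _ ≤ Wt n w E * M := mul_le_mul_right hz _
    _ = M * Wt n w E := mul_comm _ _

/-- Subset estimate for `S`. -/
lemma est_S {p : ℝ} {w : En n → ℝ} (hw : IsWeight' n w) (hp : 1 < p)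
    {Q E : Set (En n)} {M : ℝ≥0∞} (hz : Wt n w Q * St n p w Q ^ (p - 1) ≤ M)
    (hE : E ⊆ Q) :
    St n p w Q * volume E ^ (p / (p - 1)) ≤ M ^ (p / (p - 1) - 1) * St n p w E := by
  have hp0 : (0:ℝ) < p := lt_trans one_pos hp
  have hp1 : (0:ℝ) < p - 1 := by linarith
  have hq1 : p / (p - 1) - 1 = 1 / (p - 1) := by field_simp; ring
  have hq1' : (0:ℝ) ≤ p / (p - 1) - 1 := by rw [hq1]; positivity
  -- dual form of the hypothesis
  have hz' : St n p w Q * Wt n w Q ^ (p / (p - 1) - 1) ≤ M ^ (p / (p - 1) - 1) := by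
    have h3 := ENNReal.rpow_le_rpow hz hq1'
    calc St n p w Q * Wt n w Q ^ (p / (p - 1) - 1)
        = (Wt n w Q * St n p w Q ^ (p - 1)) ^ (p / (p - 1) - 1) := by
          rw [ENNReal.mul_rpow_of_nonneg _ _ hq1', ← ENNReal.rpow_mul, hq1,
            mul_one_div, div_self hp1.ne', ENNReal.rpow_one, mul_comm]
      _ ≤ _ := h3
  have h2 : volume E ^ (p / (p - 1)) ≤ Wt n w E ^ (p / (p - 1) - 1) * St n p w E := by
    have hq0 : (0:ℝ) < p / (p - 1) := div_pos hp0 hp1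
    calc volume E ^ (p / (p - 1))
        ≤ (Wt n w E ^ (1 / p) * St n p w E ^ ((p - 1) / p)) ^ (p / (p - 1)) :=
          ENNReal.rpow_le_rpow (holder hw hp E) hq0.le
      _ = Wt n w E ^ (p / (p - 1) - 1) * St n p w E := by
          rw [ENNReal.mul_rpow_of_nonneg _ _ hq0.le, ← ENNReal.rpow_mul, ← ENNReal.rpow_mul]
          congr 1
          · congr 1
            rw [hq1]
            field_simp
          · rw [div_mul_div_comm, mul_comm (p-1) p, div_self (by positivity), ENNReal.rpow_one]
  calc St n p w Q * volume E ^ (p / (p - 1))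
      ≤ St n p w Q * (Wt n w E ^ (p / (p - 1) - 1) * St n p w E) := mul_le_mul_right h2 _
    _ ≤ St n p w Q * (Wt n w Q ^ (p / (p - 1) - 1) * St n p w E) := by
        exact mul_le_mul_right (mul_le_mul_left
          (ENNReal.rpow_le_rpow (Wt_mono hE) hq1') _) _
    _ = St n p w E * (St n p w Q * Wt n w Q ^ (p / (p - 1) - 1)) := by ring
    _ ≤ St n p w E * M ^ (p / (p - 1) - 1) := mul_le_mul_right hz' _
    _ = M ^ (p / (p - 1) - 1) * St n p w E := mul_comm _ _


lemma le_mul_inv_of_mul_le {X A B : ℝ≥0∞} (hA0 : A ≠ 0) (hAt : A ≠ ⊤) (h : X * A ≤ B) :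
    X ≤ B * A⁻¹ := by
  have h2 := mul_le_mul_left h A⁻¹
  rwa [mul_assoc, ENNReal.mul_inv_cancel hA0 hAt, mul_one] at h2

lemma Pw_double {p r : ℝ} {w : En n → ℝ} (hw : IsWeight' n w) (hp : 1 < p) (hr : 0 < r)
    {K : ℝ≥0∞} (hK : K ≠ ⊤) (h : Pw n p w r K) :
    ∃ K', K' ≠ ⊤ ∧ Pw n p w (2 * r) K' := by
  have hp0 : (0:ℝ) < p := lt_trans one_pos hp
  have hp1 : (0:ℝ) < p - 1 := by linarith
  have hq0 : (0:ℝ) < p / (p - 1) := div_pos hp0 hp1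
  have hq1' : (0:ℝ) ≤ p / (p - 1) - 1 := by
    rw [(by field_simp; ring : p / (p - 1) - 1 = 1 / (p - 1))]; positivity
  set Vr := volume (cube n r (0 : En n)) with hVrdef
  set Vh := volume (cube n (r / 2) (0 : En n)) with hVhdef
  set V2 := volume (cube n (2 * r) (0 : En n)) with hV2def
  have hVr0 : Vr ≠ 0 := volume_cube_ne_zero hr _
  have hVrt : Vr ≠ ⊤ := volume_cube_ne_top _ _
  have hVh0 : Vh ≠ 0 := volume_cube_ne_zero (by linarith) _
  have hVht : Vh ≠ ⊤ := volume_cube_ne_top _ _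
  have hV20 : V2 ≠ 0 := volume_cube_ne_zero (by linarith) _
  have hV2t : V2 ≠ ⊤ := volume_cube_ne_top _ _
  set M := K * Vr ^ p with hMdef
  have hMt : M ≠ ⊤ := ENNReal.mul_ne_top hK (ENNReal.rpow_ne_top_of_nonneg hp0.le hVrt)
  set K₁ := M * (Vh ^ p)⁻¹ with hK1def
  set K₂ := M ^ (p / (p - 1) - 1) * (Vh ^ (p / (p - 1)))⁻¹ with hK2def
  have hK1t : K₁ ≠ ⊤ := ENNReal.mul_ne_top hMt
    (ENNReal.inv_ne_top.2 (ENNReal.rpow_pos (pos_iff_ne_zero.2 hVh0) hVht).ne')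
  have hK2t : K₂ ≠ ⊤ := ENNReal.mul_ne_top (ENNReal.rpow_ne_top_of_nonneg hq1' hMt)
    (ENNReal.inv_ne_top.2 (ENNReal.rpow_pos (pos_iff_ne_zero.2 hVh0) hVht).ne')
  set N := ((Fintype.card (Fin n → Bool × Bool) : ℕ) : ℝ≥0∞) with hNdef
  have hNt : N ≠ ⊤ := ENNReal.natCast_ne_top _
  -- the bounds per shifted cube
  have hW : ∀ z : En n, ∀ ε : Fin n → Bool × Bool,
      Wt n w (cube n r (z + shift n r ε)) ≤ K₁ * Wt n w (cube n r z) ∧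
      St n p w (cube n r (z + shift n r ε)) ≤ K₂ * St n p w (cube n r z) := by
    intro z ε
    have hsub := overlap_subset z (shift n r ε)
      (fun j => ⟨abs_shift_re r hr.le ε j, abs_shift_im r hr.le ε j⟩)
    have hsub1 : cube n (r / 2) (z + (2⁻¹ : ℝ) • shift n r ε) ⊆ cube n r z :=
      hsub.trans Set.inter_subset_left
    have hsub2 : cube n (r / 2) (z + (2⁻¹ : ℝ) • shift n r ε) ⊆
        cube n r (z + shift n r ε) := hsub.trans Set.inter_subset_right
    have hvolE : volume (cube n (r / 2) (z + (2⁻¹ : ℝ) • shift n r ε)) = Vh :=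
      volume_cube_translate _ _
    have hz : Wt n w (cube n r (z + shift n r ε)) *
        St n p w (cube n r (z + shift n r ε)) ^ (p - 1) ≤ M := by
      have h2 := h (z + shift n r ε)
      rwa [volume_cube_translate, ← hVrdef, ← hMdef] at h2
    have hW1 := est_W hw hp hz hsub2
    have hS1 := est_S hw hp hz hsub2
    rw [hvolE] at hW1 hS1
    have hVhp0 : Vh ^ p ≠ 0 := (ENNReal.rpow_pos (pos_iff_ne_zero.2 hVh0) hVht).ne'
    have hVhpt : Vh ^ p ≠ ⊤ := ENNReal.rpow_ne_top_of_nonneg hp0.le hVht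
    have hVhq0 : Vh ^ (p / (p - 1)) ≠ 0 :=
      (ENNReal.rpow_pos (pos_iff_ne_zero.2 hVh0) hVht).ne'
    have hVhqt : Vh ^ (p / (p - 1)) ≠ ⊤ := ENNReal.rpow_ne_top_of_nonneg hq0.le hVht
    constructor
    · have h3 := le_mul_inv_of_mul_le hVhp0 hVhpt hW1
      calc Wt n w (cube n r (z + shift n r ε))
          ≤ M * Wt n w (cube n (r / 2) (z + (2⁻¹ : ℝ) • shift n r ε)) * (Vh ^ p)⁻¹ := h3
        _ ≤ M * Wt n w (cube n r z) * (Vh ^ p)⁻¹ :=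
            mul_le_mul_left (mul_le_mul_right (Wt_mono hsub1) _) _
        _ = K₁ * Wt n w (cube n r z) := by rw [hK1def]; ring
    · have h3 := le_mul_inv_of_mul_le hVhq0 hVhqt hS1
      calc St n p w (cube n r (z + shift n r ε))
          ≤ M ^ (p / (p - 1) - 1) *
              St n p w (cube n (r / 2) (z + (2⁻¹ : ℝ) • shift n r ε)) *
              (Vh ^ (p / (p - 1)))⁻¹ := h3
        _ ≤ M ^ (p / (p - 1) - 1) * St n p w (cube n r z) * (Vh ^ (p / (p - 1)))⁻¹ :=
            mul_le_mul_left (mul_le_mul_right (St_mono hsub1) _) _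
        _ = K₂ * St n p w (cube n r z) := by rw [hK2def]; ring
  -- summing over the 4^n shifted cubes
  have hWsum : ∀ z : En n,
      Wt n w (cube n (2 * r) z) ≤ N * K₁ * Wt n w (cube n r z) := by
    intro z
    calc Wt n w (cube n (2 * r) z)
        ≤ Wt n w (⋃ ε : Fin n → Bool × Bool, cube n r (z + shift n r ε)) :=
          Wt_mono (cube_two_subset hr.le z)
      _ ≤ ∑' ε : Fin n → Bool × Bool, Wt n w (cube n r (z + shift n r ε)) :=
          lintegral_iUnion_le _ _
      _ ≤ ∑' _ε : Fin n → Bool × Bool, K₁ * Wt n w (cube n r z) :=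
          ENNReal.tsum_le_tsum fun ε => (hW z ε).1
      _ = N * (K₁ * Wt n w (cube n r z)) := by
          rw [tsum_fintype, Finset.sum_const, nsmul_eq_mul, Finset.card_univ, hNdef]
      _ = N * K₁ * Wt n w (cube n r z) := by ring
  have hSsum : ∀ z : En n,
      St n p w (cube n (2 * r) z) ≤ N * K₂ * St n p w (cube n r z) := by
    intro z
    calc St n p w (cube n (2 * r) z)
        ≤ St n p w (⋃ ε : Fin n → Bool × Bool, cube n r (z + shift n r ε)) :=
          St_mono (cube_two_subset hr.le z)
      _ ≤ ∑' ε : Fin n → Bool × Bool, St n p w (cube n r (z + shift n r ε)) :=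
          lintegral_iUnion_le _ _
      _ ≤ ∑' _ε : Fin n → Bool × Bool, K₂ * St n p w (cube n r z) :=
          ENNReal.tsum_le_tsum fun ε => (hW z ε).2
      _ = N * (K₂ * St n p w (cube n r z)) := by
          rw [tsum_fintype, Finset.sum_const, nsmul_eq_mul, Finset.card_univ, hNdef]
      _ = N * K₂ * St n p w (cube n r z) := by ring
  -- conclusion
  refine ⟨(N * K₁) * (N * K₂) ^ (p - 1) * M * (V2 ^ p)⁻¹, ?_, ?_⟩
  · refine ENNReal.mul_ne_top (ENNReal.mul_ne_top (ENNReal.mul_ne_top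
      (ENNReal.mul_ne_top hNt hK1t)
      (ENNReal.rpow_ne_top_of_nonneg (by linarith) (ENNReal.mul_ne_top hNt hK2t))) hMt)
      (ENNReal.inv_ne_top.2 (ENNReal.rpow_pos (pos_iff_ne_zero.2 hV20) hV2t).ne')
  · intro z
    have hV2z : volume (cube n (2 * r) z) = V2 := volume_cube_translate _ _
    rw [hV2z]
    calc Wt n w (cube n (2 * r) z) * St n p w (cube n (2 * r) z) ^ (p - 1)
        ≤ (N * K₁ * Wt n w (cube n r z)) *
            (N * K₂ * St n p w (cube n r z)) ^ (p - 1) := by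
          exact mul_le_mul' (hWsum z)
            (ENNReal.rpow_le_rpow (hSsum z) (by linarith))
      _ = (N * K₁) * (N * K₂) ^ (p - 1) *
            (Wt n w (cube n r z) * St n p w (cube n r z) ^ (p - 1)) := by
          rw [ENNReal.mul_rpow_of_nonneg _ _ (by linarith : (0:ℝ) ≤ p - 1)]
          ring
      _ ≤ (N * K₁) * (N * K₂) ^ (p - 1) * (K * volume (cube n r z) ^ p) :=
          mul_le_mul_right (h z) _
      _ = (N * K₁) * (N * K₂) ^ (p - 1) * M := by
          rw [volume_cube_translate, ← hVrdef, hMdef]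
      _ = (N * K₁) * (N * K₂) ^ (p - 1) * M * ((V2 ^ p)⁻¹ * V2 ^ p) := by
          rw [ENNReal.inv_mul_cancel (ENNReal.rpow_pos (pos_iff_ne_zero.2 hV20) hV2t).ne'
            (ENNReal.rpow_ne_top_of_nonneg hp0.le hV2t), mul_one]
      _ = (N * K₁) * (N * K₂) ^ (p - 1) * M * (V2 ^ p)⁻¹ * V2 ^ p := by ring


lemma Pw_shrink {p ρ r' : ℝ} {w : En n → ℝ} (hp : 1 < p) (h0 : 0 < r') (hle : r' ≤ ρ)
    {K : ℝ≥0∞} (hK : K ≠ ⊤) (h : Pw n p w ρ K) :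
    ∃ K', K' ≠ ⊤ ∧ Pw n p w r' K' := by
  have hp0 : (0:ℝ) < p := lt_trans one_pos hp
  set Vρ := volume (cube n ρ (0 : En n)) with hVρdef
  set Vs := volume (cube n r' (0 : En n)) with hVsdef
  have hVρt : Vρ ≠ ⊤ := volume_cube_ne_top _ _
  have hVs0 : Vs ≠ 0 := volume_cube_ne_zero h0 _
  have hVst : Vs ≠ ⊤ := volume_cube_ne_top _ _
  refine ⟨K * Vρ ^ p * (Vs ^ p)⁻¹, ?_, ?_⟩
  · exact ENNReal.mul_ne_top
      (ENNReal.mul_ne_top hK (ENNReal.rpow_ne_top_of_nonneg hp0.le hVρt))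
      (ENNReal.inv_ne_top.2 (ENNReal.rpow_pos (pos_iff_ne_zero.2 hVs0) hVst).ne')
  · intro z
    have hs : cube n r' z ⊆ cube n ρ z := cube_subset hle z
    calc Wt n w (cube n r' z) * St n p w (cube n r' z) ^ (p - 1)
        ≤ Wt n w (cube n ρ z) * St n p w (cube n ρ z) ^ (p - 1) :=
          mul_le_mul' (Wt_mono hs) (ENNReal.rpow_le_rpow (St_mono hs) (by linarith))
      _ ≤ K * volume (cube n ρ z) ^ p := h z
      _ = K * Vρ ^ p := by rw [volume_cube_translate]
      _ = K * Vρ ^ p * ((Vs ^ p)⁻¹ * Vs ^ p) := by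
          rw [ENNReal.inv_mul_cancel (ENNReal.rpow_pos (pos_iff_ne_zero.2 hVs0) hVst).ne'
            (ENNReal.rpow_ne_top_of_nonneg hp0.le hVst), mul_one]
      _ = K * Vρ ^ p * (Vs ^ p)⁻¹ * Vs ^ p := by ring
      _ = K * Vρ ^ p * (Vs ^ p)⁻¹ * volume (cube n r' z) ^ p := by
          rw [volume_cube_translate]

lemma memApr_of_Pw {p ρ : ℝ} {w : En n → ℝ} (hp : 1 < p) (hρ : 0 < ρ)
    {K : ℝ≥0∞} (hK : K ≠ ⊤) (h : Pw n p w ρ K) : MemApr n p ρ w := by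
  have hp0 : (0:ℝ) < p := lt_trans one_pos hp
  refine ⟨K.toReal, fun z => ?_⟩
  have hV0 : volume (cube n ρ z) ≠ 0 := volume_cube_ne_zero hρ z
  have hVt : volume (cube n ρ z) ≠ ⊤ := volume_cube_ne_top _ _
  rw [ENNReal.ofReal_toReal hK]
  have step : ((volume (cube n ρ z))⁻¹ * Wt n w (cube n ρ z)) *
      ((volume (cube n ρ z))⁻¹ * St n p w (cube n ρ z)) ^ (p - 1) ≤ K := by
    rw [avg_eq _ _ _ hV0 hVt hp]
    calc (volume (cube n ρ z))⁻¹ ^ p *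
          (Wt n w (cube n ρ z) * St n p w (cube n ρ z) ^ (p - 1))
        ≤ (volume (cube n ρ z))⁻¹ ^ p * (K * volume (cube n ρ z) ^ p) :=
          mul_le_mul_right (h z) _
      _ = K * ((volume (cube n ρ z))⁻¹ ^ p * volume (cube n ρ z) ^ p) := by ring
      _ = K := by rw [inv_rpow_mul_rpow hp0.le _ hV0 hVt, mul_one]
  exact step

lemma Pw_of_memApr {p ρ : ℝ} {w : En n → ℝ} (hp : 1 < p) (hρ : 0 < ρ)
    (h : MemApr n p ρ w) : ∃ K, K ≠ ⊤ ∧ Pw n p w ρ K := by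
  have hp0 : (0:ℝ) < p := lt_trans one_pos hp
  obtain ⟨C, hC⟩ := h
  refine ⟨ENNReal.ofReal C, ENNReal.ofReal_ne_top, fun z => ?_⟩
  have hV0 : volume (cube n ρ z) ≠ 0 := volume_cube_ne_zero hρ z
  have hVt : volume (cube n ρ z) ≠ ⊤ := volume_cube_ne_top _ _
  have h2 : ((volume (cube n ρ z))⁻¹ * Wt n w (cube n ρ z)) *
      ((volume (cube n ρ z))⁻¹ * St n p w (cube n ρ z)) ^ (p - 1) ≤ ENNReal.ofReal C := hC z
  rw [avg_eq _ _ _ hV0 hVt hp] at h2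
  calc Wt n w (cube n ρ z) * St n p w (cube n ρ z) ^ (p - 1)
      = volume (cube n ρ z) ^ p * ((volume (cube n ρ z))⁻¹ ^ p *
        (Wt n w (cube n ρ z) * St n p w (cube n ρ z) ^ (p - 1))) := by
        rw [← mul_assoc, mul_comm (volume (cube n ρ z) ^ p),
          inv_rpow_mul_rpow hp0.le _ hV0 hVt, one_mul]
    _ ≤ volume (cube n ρ z) ^ p * ENNReal.ofReal C := mul_le_mul_right h2 _
    _ = ENNReal.ofReal C * volume (cube n ρ z) ^ p := mul_comm _ _

end AprAux

/-- the classes `A_{p,r}` coincide for all `r > 0`. -/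
theorem Apr_of_Apr (n : ℕ) (hn : 1 ≤ n) (p : ℝ) (hp : 1 < p) (w : En n → ℝ)
    (hw : IsWeight n w) (h : ∃ r : ℝ, 0 < r ∧ MemApr n p r w) :
    ∀ r' : ℝ, 0 < r' → MemApr n p r' w := by
  obtain ⟨r, hr, hmem⟩ := h
  have hw' : AprAux.IsWeight' n w := ⟨hw.1, hw.2.1⟩
  intro r' hr'
  obtain ⟨K, hKt, hPw⟩ := AprAux.Pw_of_memApr hp hr hmem
  have up : ∀ k : ℕ, ∃ K', K' ≠ ⊤ ∧ AprAux.Pw n p w (2 ^ k * r) K' := by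
    intro k
    induction k with
    | zero => exact ⟨K, hKt, by rw [pow_zero, one_mul]; exact hPw⟩
    | succ k ih =>
      obtain ⟨K', hK't, hP⟩ := ih
      obtain ⟨K'', hK''t, hP2⟩ := AprAux.Pw_double hw' hp (by positivity) hK't hP
      refine ⟨K'', hK''t, ?_⟩
      have e : (2:ℝ) ^ (k + 1) * r = 2 * (2 ^ k * r) := by ring
      rwa [e]
  obtain ⟨k, hk⟩ : ∃ k : ℕ, r' / r < 2 ^ k := pow_unbounded_of_one_lt _ one_lt_two
  have hle : r' ≤ 2 ^ k * r := by
    rw [div_lt_iff₀ hr] at hk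
    nlinarith
  obtain ⟨K', hK't, hP⟩ := up k
  obtain ⟨K'', hK''t, hP2⟩ := AprAux.Pw_shrink hp hr' hle hK't hP
  exact AprAux.memApr_of_Pw hp hr' hK''t hP2

end
end

section
/- Let n ≥ 1, p > 1, r > 0, and let w be a weight on ℂⁿ belonging to A_{p,3r}. Then there exists a constant C ≥ 1, independent of ν and ν', such that for all lattice points ν, ν' ∈ rℤ^{2n}, w(Q_r(ν)) ≤ C^{|ν - ν'|} · w(Q_r(ν')), where |ν - ν'| is the Euclidean distance. -/
open MeasureTheory ENNReal Metric

noncomputable section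

/-- `ν` is a point of the lattice `rℤ^{2n} ⊆ ℂⁿ`. -/
def IsLatticePoint (n : ℕ) (r : ℝ) (ν : En n) : Prop :=
  ∀ j, ∃ a b : ℤ, ν j = (r * a : ℝ) + (r * b : ℝ) * Complex.I

namespace Aux

variable {n : ℕ}

lemma isClosed_cube (s : ℝ) (z : En n) : IsClosed (cube n s z) := by
  have h : cube n s z = ⋂ j, ((fun u : En n => |(u j).re - (z j).re|) ⁻¹' Set.Iic (s/2)) ∩
      ((fun u : En n => |(u j).im - (z j).im|) ⁻¹' Set.Iic (s/2)) := by
    ext u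
    simp [cube, Set.mem_iInter, forall_and]
  rw [h]
  exact isClosed_iInter fun j =>
    (isClosed_Iic.preimage (((Complex.continuous_re.comp (by fun_prop : Continuous fun u : En n => u j)).sub
        continuous_const).abs)).inter
    (isClosed_Iic.preimage (((Complex.continuous_im.comp (by fun_prop : Continuous fun u : En n => u j)).sub
        continuous_const).abs))

lemma norm_coord_le (x : En n) (j : Fin n) : ‖x j‖ ≤ ‖x‖ := by
  rw [EuclideanSpace.norm_eq]
  have h1 : ‖x j‖^2 ≤ ∑ i, ‖x i‖^2 :=
    Finset.single_le_sum (f := fun i => ‖x i‖^2) (fun i _ => sq_nonneg _) (Finset.mem_univ j)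
  calc ‖x j‖ = Real.sqrt (‖x j‖^2) := by rw [Real.sqrt_sq (norm_nonneg _)]
    _ ≤ _ := Real.sqrt_le_sqrt h1

lemma cube_subset_closedBall (s : ℝ) (z : En n) :
    cube n s z ⊆ Metric.closedBall z (Real.sqrt (n * s^2)) := by
  intro u hu
  rw [Metric.mem_closedBall, dist_eq_norm, EuclideanSpace.norm_eq]
  apply Real.sqrt_le_sqrt
  calc ∑ i, ‖(u - z) i‖^2 ≤ ∑ _i : Fin n, s^2 := by
        apply Finset.sum_le_sum
        intro i _
        have h1 := (hu i).1
        have h2 := (hu i).2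
        have e : (u - z) i = u i - z i := by simp
        rw [e, Complex.sq_norm, Complex.normSq_apply,
          Complex.sub_re, Complex.sub_im]
        have hs : 0 ≤ s / 2 := le_trans (abs_nonneg _) h1
        nlinarith [abs_le.1 h1, abs_le.1 h2]
    _ = n * s^2 := by simp [Finset.sum_const, mul_comm]

lemma isCompact_cube (s : ℝ) (z : En n) : IsCompact (cube n s z) :=
  Metric.isCompact_of_isClosed_isBounded (isClosed_cube s z)
    ((Metric.isBounded_closedBall).subset (cube_subset_closedBall s z))

lemma measurableSet_cube (s : ℝ) (z : En n) : MeasurableSet (cube n s z) :=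
  (isClosed_cube s z).measurableSet

lemma ball_subset_cube (s : ℝ) (z : En n) : Metric.ball z (s/2) ⊆ cube n s z := by
  intro u hu j
  have hd : ‖u - z‖ < s / 2 := by rwa [Metric.mem_ball, dist_eq_norm] at hu
  have h1 : ‖(u - z) j‖ ≤ ‖u - z‖ := norm_coord_le _ _
  have e : (u - z) j = u j - z j := by simp
  rw [e] at h1
  constructor
  · have := Complex.abs_re_le_norm (u j - z j)
    rw [Complex.sub_re] at this
    linarith
  · have := Complex.abs_im_le_norm (u j - z j)
    rw [Complex.sub_im] at this
    linarith

lemma volume_cube_pos {s : ℝ} (hs : 0 < s) (z : En n) : 0 < volume (cube n s z) :=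
  lt_of_lt_of_le (measure_ball_pos volume z (by linarith)) (measure_mono (ball_subset_cube s z))

lemma volume_cube_lt_top (s : ℝ) (z : En n) : volume (cube n s z) < ⊤ :=
  (isCompact_cube s z).measure_lt_top

lemma volume_cube_eq (s : ℝ) (z : En n) : volume (cube n s z) = volume (cube n s 0) := by
  have h : cube n s z = (fun u => -z + u) ⁻¹' (cube n s 0) := by
    ext u
    simp only [cube, Set.mem_setOf_eq, Set.mem_preimage, PiLp.add_apply, PiLp.neg_apply,
      PiLp.zero_apply, Complex.add_re, Complex.neg_re, Complex.add_im, Complex.neg_im,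
      Complex.zero_re, Complex.zero_im, sub_zero]
    refine forall_congr' fun j => ?_
    rw [neg_add_eq_sub, neg_add_eq_sub]
  rw [h, measure_preimage_add]


variable {w : En n → ℝ}

lemma wint_pos (hw : IsWeight n w) {s : ℝ} (hs : 0 < s) (z : En n) :
    0 < ∫⁻ u in cube n s z, ENNReal.ofReal (w u) := by
  rcases (show (0:ℝ≥0∞) ≤ ∫⁻ u in cube n s z, ENNReal.ofReal (w u) from zero_le).lt_or_eq with h | h
  · exact h
  exfalso
  have h0 := (setLIntegral_eq_zero_iff (measurableSet_cube s z) hw.1.ennreal_ofReal).1 h.symm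
  have h2 : ∀ᵐ x : En n, x ∉ cube n s z := by
    filter_upwards [h0, hw.2.1] with x hx hpos hm
    have := hx hm
    rw [ENNReal.ofReal_eq_zero] at this
    linarith
  have : volume (cube n s z) = 0 := measure_eq_zero_iff_ae_notMem.2 h2
  exact absurd this (volume_cube_pos hs z).ne'

lemma wint_ne_top (hw : IsWeight n w) (s : ℝ) (z : En n) :
    (∫⁻ u in cube n s z, ENNReal.ofReal (w u)) ≠ ⊤ := by
  have hint : IntegrableOn w (cube n s z) volume :=
    hw.2.2.integrableOn_isCompact (isCompact_cube s z)
  have hb : (∫⁻ u in cube n s z, ENNReal.ofReal (w u)) ≤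
      ∫⁻ u in cube n s z, (‖w u‖₊ : ℝ≥0∞) := by
    apply lintegral_mono
    intro u
    show ENNReal.ofReal (w u) ≤ (‖w u‖₊ : ℝ≥0∞)
    rw [show ((‖w u‖₊ : ℝ≥0∞)) = ‖w u‖ₑ from rfl, Real.enorm_eq_ofReal_abs]
    exact ENNReal.ofReal_le_ofReal (le_abs_self _)
  exact (lt_of_le_of_lt hb hint.2).ne

lemma cube_mono {s t : ℝ} (hst : s ≤ t) (z : En n) : cube n s z ⊆ cube n t z := by
  intro u hu j
  exact ⟨le_trans (hu j).1 (by linarith), le_trans (hu j).2 (by linarith)⟩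

lemma doubling {p r : ℝ} (hp : 1 < p) (hr : 0 < r) (hw : IsWeight n w)
    (hApr : MemApr n p (3 * r) w) :
    ∃ D : ℝ≥0∞, D ≠ ⊤ ∧ ∀ z : En n,
      (∫⁻ u in cube n (3 * r) z, ENNReal.ofReal (w u)) ≤
        D * ∫⁻ u in cube n r z, ENNReal.ofReal (w u) := by
  obtain ⟨C, hC⟩ := hApr
  have h3r : 0 < 3 * r := by linarith
  have hp0 : (0:ℝ) < p := by linarith
  have hp1 : (0:ℝ) < p - 1 := by linarith
  set q : ℝ := p / (p - 1) with hq
  have hpq : p.HolderConjugate q := Real.HolderConjugate.conjExponent hp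
  set V₁ : ℝ≥0∞ := volume (cube n r (0 : En n)) with hV₁
  set V₃ : ℝ≥0∞ := volume (cube n (3 * r) (0 : En n)) with hV₃
  have hV₁0 : V₁ ≠ 0 := (volume_cube_pos hr 0).ne'
  have hV₁t : V₁ ≠ ⊤ := (volume_cube_lt_top r 0).ne
  have hV₃0 : V₃ ≠ 0 := (volume_cube_pos h3r 0).ne'
  have hV₃t : V₃ ≠ ⊤ := (volume_cube_lt_top (3 * r) 0).ne
  have hV₁p0 : V₁ ^ p ≠ 0 := (ENNReal.rpow_pos (pos_iff_ne_zero.2 hV₁0) hV₁t).ne'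
  have hV₁pt : V₁ ^ p ≠ ⊤ := (ENNReal.rpow_lt_top_of_nonneg hp0.le hV₁t).ne
  refine ⟨ENNReal.ofReal C * (V₃ * V₃ ^ (p - 1)) * (V₁ ^ p)⁻¹, ?_, ?_⟩
  · exact ENNReal.mul_ne_top (ENNReal.mul_ne_top ENNReal.ofReal_ne_top
      (ENNReal.mul_ne_top hV₃t (ENNReal.rpow_lt_top_of_nonneg hp1.le hV₃t).ne))
      (ENNReal.inv_ne_top.2 hV₁p0)
  intro z
  have hAz := hC z
  rw [show volume (cube n (3 * r) z) = V₃ from volume_cube_eq _ _] at hAz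
  set A : ℝ≥0∞ := ∫⁻ u in cube n (3 * r) z, ENNReal.ofReal (w u) with hA
  set B : ℝ≥0∞ := ∫⁻ u in cube n r z, ENNReal.ofReal (w u) with hB
  set S : ℝ≥0∞ := ∫⁻ u in cube n (3 * r) z, ENNReal.ofReal (w u ^ (-(1 / (p - 1)))) with hS
  have hvE : volume (cube n r z) = V₁ := volume_cube_eq _ _
  have hA0 : A ≠ 0 := (wint_pos hw h3r z).ne'
  have hAt : A ≠ ⊤ := wint_ne_top hw _ z
  have hB0 : B ≠ 0 := (wint_pos hw hr z).ne'
  have hBt : B ≠ ⊤ := wint_ne_top hw _ z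
  -- S is finite
  have hSt : S ≠ ⊤ := by
    by_contra hS'
    rw [hS', ENNReal.mul_top (ENNReal.inv_ne_zero.2 hV₃t),
      ENNReal.top_rpow_of_pos hp1, ENNReal.mul_top
        (mul_ne_zero (ENNReal.inv_ne_zero.2 hV₃t) hA0)] at hAz
    exact absurd hAz (by simp)
  -- rearrange the A_p condition
  have hstep : A * S ^ (p - 1) ≤ ENNReal.ofReal C * (V₃ * V₃ ^ (p - 1)) := by
    have h1 : (V₃⁻¹ * A) * (V₃⁻¹ * S) ^ (p - 1)
        = (V₃⁻¹ * V₃⁻¹ ^ (p - 1)) * (A * S ^ (p - 1)) := by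
      rw [ENNReal.mul_rpow_of_ne_top (ENNReal.inv_ne_top.2 hV₃0) hSt]
      ring
    rw [h1] at hAz
    have h2 : (V₃ * V₃ ^ (p - 1)) * ((V₃⁻¹ * V₃⁻¹ ^ (p - 1)) * (A * S ^ (p - 1)))
        = A * S ^ (p - 1) := by
      rw [ENNReal.inv_rpow]
      have h3 : (V₃ * V₃ ^ (p - 1)) * ((V₃⁻¹ * (V₃ ^ (p - 1))⁻¹) * (A * S ^ (p - 1)))
          = ((V₃ * V₃⁻¹) * (V₃ ^ (p - 1) * (V₃ ^ (p - 1))⁻¹)) * (A * S ^ (p - 1)) := by ring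
      rw [h3, ENNReal.mul_inv_cancel hV₃0 hV₃t,
        ENNReal.mul_inv_cancel (ENNReal.rpow_pos (pos_iff_ne_zero.2 hV₃0) hV₃t).ne'
          (ENNReal.rpow_lt_top_of_nonneg hp1.le hV₃t).ne, one_mul, one_mul]
    calc A * S ^ (p - 1)
        = (V₃ * V₃ ^ (p - 1)) * ((V₃⁻¹ * V₃⁻¹ ^ (p - 1)) * (A * S ^ (p - 1))) := h2.symm
      _ ≤ (V₃ * V₃ ^ (p - 1)) * ENNReal.ofReal C := mul_le_mul_right hAz _
      _ = ENNReal.ofReal C * (V₃ * V₃ ^ (p - 1)) := mul_comm _ _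
  -- Hölder
  have hWm : Measurable fun u : En n => ENNReal.ofReal (w u) := hw.1.ennreal_ofReal
  have holder : V₁ ≤ B ^ (1/p) * S ^ (1/q) := by
    set μ := volume.restrict (cube n r z) with hμ
    have hkey := ENNReal.lintegral_mul_le_Lp_mul_Lq μ hpq
      ((hWm.pow_const (1/p)).aemeasurable) ((hWm.pow_const (-(1/p))).aemeasurable)
    have hL : ∫⁻ u, ((fun u => ENNReal.ofReal (w u) ^ (1/p)) * (fun u => ENNReal.ofReal (w u) ^ (-(1/p)))) u ∂μ
        = volume (cube n r z) := by
      have hae : ∀ᵐ u ∂μ, ENNReal.ofReal (w u) ^ (1/p) * ENNReal.ofReal (w u) ^ (-(1/p)) = 1 := by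
        apply ae_restrict_of_ae
        filter_upwards [hw.2.1] with x hx
        rw [← ENNReal.rpow_add _ _ (by simp [ENNReal.ofReal_eq_zero]; linarith)
          ENNReal.ofReal_ne_top]
        simp
      calc ∫⁻ u, ((fun u => ENNReal.ofReal (w u) ^ (1/p)) * (fun u => ENNReal.ofReal (w u) ^ (-(1/p)))) u ∂μ
          = ∫⁻ _u, 1 ∂μ := lintegral_congr_ae hae
        _ = volume (cube n r z) := by rw [hμ, setLIntegral_one]
    have hR1 : ∫⁻ u, (ENNReal.ofReal (w u) ^ (1/p)) ^ p ∂μ = B := by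
      apply lintegral_congr
      intro u
      rw [← ENNReal.rpow_mul, one_div_mul_cancel hp0.ne', ENNReal.rpow_one]
    have hR2 : ∫⁻ u, (ENNReal.ofReal (w u) ^ (-(1/p))) ^ q ∂μ
        = ∫⁻ u in cube n r z, ENNReal.ofReal (w u ^ (-(1 / (p - 1)))) := by
      apply lintegral_congr_ae
      apply ae_restrict_of_ae
      filter_upwards [hw.2.1] with x hx
      rw [← ENNReal.rpow_mul]
      have he : -(1/p) * q = -(1/(p-1)) := by
        rw [hq]; field_simp
      rw [he, ENNReal.ofReal_rpow_of_pos hx]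
    rw [hL, hR1, hR2] at hkey
    rw [← hvE]
    refine le_trans hkey ?_
    gcongr
    · exact lintegral_mono_set (cube_mono (by linarith) z)
  -- raise Hölder to the p-th power
  have hqinv : (1/q) * p = p - 1 := by rw [hq]; field_simp
  have holderp : V₁ ^ p ≤ B * S ^ (p - 1) := by
    calc V₁ ^ p ≤ (B ^ (1/p) * S ^ (1/q)) ^ p := ENNReal.rpow_le_rpow holder hp0.le
      _ = B * S ^ (p - 1) := by
        rw [ENNReal.mul_rpow_of_nonneg _ _ hp0.le, ← ENNReal.rpow_mul, ← ENNReal.rpow_mul,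
          one_div_mul_cancel hp0.ne', ENNReal.rpow_one, hqinv]
  -- combine
  have hfinal : A * V₁ ^ p ≤ (ENNReal.ofReal C * (V₃ * V₃ ^ (p - 1))) * B := by
    calc A * V₁ ^ p ≤ A * (B * S ^ (p - 1)) := mul_le_mul_right holderp _
      _ = B * (A * S ^ (p - 1)) := by ring
      _ ≤ B * (ENNReal.ofReal C * (V₃ * V₃ ^ (p - 1))) := mul_le_mul_right hstep _
      _ = (ENNReal.ofReal C * (V₃ * V₃ ^ (p - 1))) * B := mul_comm _ _
  calc A = (A * V₁ ^ p) * (V₁ ^ p)⁻¹ := by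
        rw [mul_assoc, ENNReal.mul_inv_cancel hV₁p0 hV₁pt, mul_one]
    _ ≤ ((ENNReal.ofReal C * (V₃ * V₃ ^ (p - 1))) * B) * (V₁ ^ p)⁻¹ :=
        mul_le_mul_left hfinal _
    _ = (ENNReal.ofReal C * (V₃ * V₃ ^ (p - 1)) * (V₁ ^ p)⁻¹) * B := by ring


/-- The lattice vector with coordinates `r*(k j) + r*(l j) i`. -/
def latv (r : ℝ) (k l : Fin n → ℤ) : En n := WithLp.toLp 2 (fun j => ⟨r * k j, r * l j⟩)

lemma latv_apply (r : ℝ) (k l : Fin n → ℤ) (j : Fin n) :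
    latv r k l j = Complex.mk (r * k j) (r * l j) := rfl

lemma cube_subset_of_close {r : ℝ} {ν μ : En n}
    (h : ∀ j, |(ν j).re - (μ j).re| ≤ r ∧ |(ν j).im - (μ j).im| ≤ r) :
    cube n r ν ⊆ cube n (3 * r) μ := by
  intro u hu j
  have h1 := (hu j).1
  have h2 := (hu j).2
  have h3 := (h j).1
  have h4 := (h j).2
  have t1 := abs_sub_le (u j).re (ν j).re (μ j).re
  have t2 := abs_sub_le (u j).im (ν j).im (μ j).im
  exact ⟨by linarith, by linarith⟩

lemma step_bound {r : ℝ} {D : ℝ≥0∞}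
    (hD : ∀ z : En n, (∫⁻ u in cube n (3 * r) z, ENNReal.ofReal (w u)) ≤
      D * ∫⁻ u in cube n r z, ENNReal.ofReal (w u))
    {ν ν'' : En n}
    (hclose : ∀ j, |(ν j).re - (ν'' j).re| ≤ r ∧ |(ν j).im - (ν'' j).im| ≤ r) :
    (∫⁻ u in cube n r ν, ENNReal.ofReal (w u)) ≤
      D * ∫⁻ u in cube n r ν'', ENNReal.ofReal (w u) :=
  le_trans (lintegral_mono_set (cube_subset_of_close hclose)) (hD ν'')

lemma chain {r : ℝ} (hr : 0 < r) {D : ℝ≥0∞}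
    (hD : ∀ z : En n, (∫⁻ u in cube n (3 * r) z, ENNReal.ofReal (w u)) ≤
      D * ∫⁻ u in cube n r z, ENNReal.ofReal (w u)) :
    ∀ (m : ℕ) (k l : Fin n → ℤ), (∑ j, ((k j).natAbs + (l j).natAbs)) = m →
    ∀ ν' : En n, (∫⁻ u in cube n r (ν' + latv r k l), ENNReal.ofReal (w u)) ≤
      D ^ m * ∫⁻ u in cube n r ν', ENNReal.ofReal (w u) := by
  intro m
  induction m with
  | zero =>
    intro k l hsum ν'
    have hk : ∀ j, k j = 0 ∧ l j = 0 := by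
      intro j
      have := Finset.sum_eq_zero_iff.1 hsum j (Finset.mem_univ j)
      omega
    have hz : latv r k l = (0 : En n) := by
      ext j
      rw [latv_apply, (hk j).1, (hk j).2]
      simp [Complex.ext_iff]
    rw [hz, add_zero, pow_zero, one_mul]
  | succ m ih =>
    intro k l hsum ν'
    have hex : ∃ j₀, k j₀ ≠ 0 ∨ l j₀ ≠ 0 := by
      by_contra h
      push_neg at h
      have h0 : ∑ j, ((k j).natAbs + (l j).natAbs) = 0 :=
        Finset.sum_eq_zero fun j _ => by have := h j; omega
      omega
    obtain ⟨j₀, hj₀⟩ := hex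
    rcases hj₀ with hk0 | hl0
    · -- decrease k at j₀
      set s : ℤ := if 0 < k j₀ then 1 else -1 with hs
      set k' := Function.update k j₀ (k j₀ - s) with hk'
      have hss : (k j₀ - s).natAbs + 1 = (k j₀).natAbs := by
        by_cases hpos : 0 < k j₀
        · simp only [hs, if_pos hpos]; omega
        · simp only [hs, if_neg hpos]; omega
      have hs1 : |(s : ℝ)| = 1 := by
        by_cases hpos : 0 < k j₀ <;> simp [hs, hpos]
      have hsum' : ∑ j, ((k' j).natAbs + (l j).natAbs) = m := by
        have e1 : ((k j₀).natAbs + (l j₀).natAbs) +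
            ∑ j ∈ Finset.univ.erase j₀, ((k j).natAbs + (l j).natAbs)
            = ∑ j, ((k j).natAbs + (l j).natAbs) :=
          Finset.add_sum_erase _ (fun j => (k j).natAbs + (l j).natAbs) (Finset.mem_univ j₀)
        have e2 : ((k' j₀).natAbs + (l j₀).natAbs) +
            ∑ j ∈ Finset.univ.erase j₀, ((k' j).natAbs + (l j).natAbs)
            = ∑ j, ((k' j).natAbs + (l j).natAbs) :=
          Finset.add_sum_erase _ (fun j => (k' j).natAbs + (l j).natAbs) (Finset.mem_univ j₀)
        have ec : ∑ j ∈ Finset.univ.erase j₀, ((k' j).natAbs + (l j).natAbs)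
            = ∑ j ∈ Finset.univ.erase j₀, ((k j).natAbs + (l j).natAbs) := by
          apply Finset.sum_congr rfl
          intro j hj
          rw [hk', Function.update_of_ne (Finset.ne_of_mem_erase hj)]
        have e3 : (k' j₀).natAbs = (k j₀).natAbs - 1 := by
          rw [hk', Function.update_self]; omega
        omega
      have hclose : ∀ j, |((ν' + latv r k l) j).re - ((ν' + latv r k' l) j).re| ≤ r ∧
          |((ν' + latv r k l) j).im - ((ν' + latv r k' l) j).im| ≤ r := by
        intro j
        have happ : ∀ (kk ll : Fin n → ℤ), (ν' + latv r kk ll) j = ν' j + latv r kk ll j :=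
          fun kk ll => rfl
        rw [happ, happ, latv_apply, latv_apply]
        by_cases hj : j = j₀
        · subst hj
          rw [hk', Function.update_self]
          constructor
          · simp only [Complex.add_re]
            have : (r : ℝ) * (k j) - r * ((k j : ℝ) - (s : ℝ)) = r * s := by ring
            push_cast
            rw [show (ν' j).re + r * (k j : ℝ) - ((ν' j).re + r * ((k j : ℝ) - (s : ℝ)))
              = r * (s : ℝ) by ring]
            rw [abs_mul, hs1, mul_one, abs_of_pos hr]
          · simp only [Complex.add_im]
            push_cast
            rw [show (ν' j).im + r * (l j : ℝ) - ((ν' j).im + r * (l j : ℝ)) = 0 by ring]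
            simp [abs_nonneg, hr.le]
        · rw [hk', Function.update_of_ne hj]
          constructor <;> simp [hr.le]
      calc (∫⁻ u in cube n r (ν' + latv r k l), ENNReal.ofReal (w u))
          ≤ D * ∫⁻ u in cube n r (ν' + latv r k' l), ENNReal.ofReal (w u) :=
            step_bound hD hclose
        _ ≤ D * (D ^ m * ∫⁻ u in cube n r ν', ENNReal.ofReal (w u)) :=
            mul_le_mul_right (ih k' l hsum' ν') _
        _ = D ^ (m + 1) * ∫⁻ u in cube n r ν', ENNReal.ofReal (w u) := by
            rw [pow_succ]; ring
    · -- decrease l at j₀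
      set s : ℤ := if 0 < l j₀ then 1 else -1 with hs
      set l' := Function.update l j₀ (l j₀ - s) with hl'
      have hss : (l j₀ - s).natAbs + 1 = (l j₀).natAbs := by
        by_cases hpos : 0 < l j₀
        · simp only [hs, if_pos hpos]; omega
        · simp only [hs, if_neg hpos]; omega
      have hs1 : |(s : ℝ)| = 1 := by
        by_cases hpos : 0 < l j₀ <;> simp [hs, hpos]
      have hsum' : ∑ j, ((k j).natAbs + (l' j).natAbs) = m := by
        have e1 : ((k j₀).natAbs + (l j₀).natAbs) +
            ∑ j ∈ Finset.univ.erase j₀, ((k j).natAbs + (l j).natAbs)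
            = ∑ j, ((k j).natAbs + (l j).natAbs) :=
          Finset.add_sum_erase _ (fun j => (k j).natAbs + (l j).natAbs) (Finset.mem_univ j₀)
        have e2 : ((k j₀).natAbs + (l' j₀).natAbs) +
            ∑ j ∈ Finset.univ.erase j₀, ((k j).natAbs + (l' j).natAbs)
            = ∑ j, ((k j).natAbs + (l' j).natAbs) :=
          Finset.add_sum_erase _ (fun j => (k j).natAbs + (l' j).natAbs) (Finset.mem_univ j₀)
        have ec : ∑ j ∈ Finset.univ.erase j₀, ((k j).natAbs + (l' j).natAbs)
            = ∑ j ∈ Finset.univ.erase j₀, ((k j).natAbs + (l j).natAbs) := by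
          apply Finset.sum_congr rfl
          intro j hj
          rw [hl', Function.update_of_ne (Finset.ne_of_mem_erase hj)]
        have e3 : (l' j₀).natAbs = (l j₀).natAbs - 1 := by
          rw [hl', Function.update_self]; omega
        omega
      have hclose : ∀ j, |((ν' + latv r k l) j).re - ((ν' + latv r k l') j).re| ≤ r ∧
          |((ν' + latv r k l) j).im - ((ν' + latv r k l') j).im| ≤ r := by
        intro j
        have happ : ∀ (kk ll : Fin n → ℤ), (ν' + latv r kk ll) j = ν' j + latv r kk ll j :=
          fun kk ll => rfl
        rw [happ, happ, latv_apply, latv_apply]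
        by_cases hj : j = j₀
        · subst hj
          rw [hl', Function.update_self]
          constructor
          · simp only [Complex.add_re]
            push_cast
            rw [show (ν' j).re + r * (k j : ℝ) - ((ν' j).re + r * (k j : ℝ)) = 0 by ring]
            simp [abs_nonneg, hr.le]
          · simp only [Complex.add_im]
            push_cast
            rw [show (ν' j).im + r * (l j : ℝ) - ((ν' j).im + r * ((l j : ℝ) - (s : ℝ)))
              = r * (s : ℝ) by ring]
            rw [abs_mul, hs1, mul_one, abs_of_pos hr]
        · rw [hl', Function.update_of_ne hj]
          constructor <;> simp [hr.le]
      calc (∫⁻ u in cube n r (ν' + latv r k l), ENNReal.ofReal (w u))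
          ≤ D * ∫⁻ u in cube n r (ν' + latv r k l'), ENNReal.ofReal (w u) :=
            step_bound hD hclose
        _ ≤ D * (D ^ m * ∫⁻ u in cube n r ν', ENNReal.ofReal (w u)) :=
            mul_le_mul_right (ih k l' hsum' ν') _
        _ = D ^ (m + 1) * ∫⁻ u in cube n r ν', ENNReal.ofReal (w u) := by
            rw [pow_succ]; ring


end Aux

/-- if `w ∈ A_{p,3r}` then `w(Q_r(ν)) ≤ C^{|ν-ν'|} w(Q_r(ν'))`
for all lattice points `ν, ν' ∈ rℤ^{2n}`. -/
theorem lattice_comparison_of_Apr (n : ℕ) (hn : 1 ≤ n) (p r : ℝ) (hp : 1 < p)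
    (hr : 0 < r) (w : En n → ℝ) (hw : IsWeight n w) (hApr : MemApr n p (3 * r) w) :
    ∃ C : ℝ, 1 ≤ C ∧ ∀ ν ν' : En n, IsLatticePoint n r ν → IsLatticePoint n r ν' →
      (∫⁻ u in cube n r ν, ENNReal.ofReal (w u))
        ≤ ENNReal.ofReal (C ^ (‖ν - ν'‖ : ℝ)) *
            ∫⁻ u in cube n r ν', ENNReal.ofReal (w u) := by
  obtain ⟨D, hDt, hD⟩ := Aux.doubling hp hr hw hApr
  set E : ℝ≥0∞ := max D 2 with hE
  have hEt : E ≠ ⊤ := (max_lt hDt.lt_top (by norm_num : (2:ℝ≥0∞) < ⊤)).ne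
  set d : ℝ := E.toReal with hd
  have hd2 : (2:ℝ) ≤ d := by
    have h2E : (2:ℝ≥0∞) ≤ E := le_max_right _ _
    have := ENNReal.toReal_mono hEt h2E
    simpa using this
  have hd1 : (1:ℝ) < d := by linarith
  have hd0 : (0:ℝ) ≤ d := by linarith
  refine ⟨d ^ (Real.sqrt (2*n) / r), ?_, ?_⟩
  · calc (1:ℝ) = d ^ (0:ℝ) := (Real.rpow_zero d).symm
      _ ≤ d ^ (Real.sqrt (2*n) / r) := by
          apply Real.rpow_le_rpow_of_exponent_le (le_of_lt hd1)
          positivity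
  intro ν ν' hν hν'
  choose a b hab using hν
  choose a' b' hab' using hν'
  set k : Fin n → ℤ := fun j => a j - a' j with hk
  set l : Fin n → ℤ := fun j => b j - b' j with hl
  have hνeq : ν = ν' + Aux.latv r k l := by
    ext j
    show ν j = ν' j + Aux.latv r k l j
    rw [Aux.latv_apply, hab j, hab' j]
    apply Complex.ext
    · simp only [Complex.add_re, Complex.add_im, Complex.mul_re, Complex.mul_im,
        Complex.I_re, Complex.I_im, Complex.ofReal_re, Complex.ofReal_im]
      simp only [hk, hl]
      push_cast
      ring
    · simp only [Complex.add_re, Complex.add_im, Complex.mul_re, Complex.mul_im,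
        Complex.I_re, Complex.I_im, Complex.ofReal_re, Complex.ofReal_im]
      simp only [hk, hl]
      push_cast
      ring
  set m : ℕ := ∑ j, ((k j).natAbs + (l j).natAbs) with hm
  have hchain := Aux.chain hr hD m k l hm.symm ν'
  rw [← hνeq] at hchain
  -- the norm of the difference
  have hsub : ν - ν' = Aux.latv r k l := by rw [hνeq]; exact add_sub_cancel_left ν' _
  have hns : ‖ν - ν'‖^2 = r^2 * ∑ j, ((k j:ℝ)^2 + (l j:ℝ)^2) := by
    rw [hsub, EuclideanSpace.norm_eq, Real.sq_sqrt (by positivity), Finset.mul_sum]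
    apply Finset.sum_congr rfl
    intro j _
    rw [Aux.latv_apply, Complex.sq_norm, Complex.normSq_mk]
    ring
  -- the combinatorial bound
  have hmsq : ((m:ℝ))^2 ≤ 2*n * ∑ j, ((k j:ℝ)^2 + (l j:ℝ)^2) := by
    have hcast : (m:ℝ) = ∑ j, (|(k j:ℝ)| + |(l j:ℝ)|) := by
      rw [hm]
      push_cast [Nat.cast_natAbs]
      rfl
    have h1 : ((m:ℝ))^2 ≤ (n:ℝ) * ∑ j, (|(k j:ℝ)| + |(l j:ℝ)|)^2 := by
      rw [hcast]
      have := sq_sum_le_card_mul_sum_sq (s := (Finset.univ : Finset (Fin n)))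
        (f := fun j => |(k j:ℝ)| + |(l j:ℝ)|)
      simpa using this
    have h2 : ∑ j, (|(k j:ℝ)| + |(l j:ℝ)|)^2 ≤ ∑ j, 2*((k j:ℝ)^2 + (l j:ℝ)^2) := by
      apply Finset.sum_le_sum
      intro j _
      nlinarith [sq_nonneg (|(k j:ℝ)| - |(l j:ℝ)|), sq_abs ((k j:ℝ)), sq_abs ((l j:ℝ)),
        abs_nonneg ((k j:ℝ)), abs_nonneg ((l j:ℝ))]
    calc ((m:ℝ))^2 ≤ (n:ℝ) * ∑ j, (|(k j:ℝ)| + |(l j:ℝ)|)^2 := h1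
      _ ≤ (n:ℝ) * ∑ j, 2*((k j:ℝ)^2 + (l j:ℝ)^2) := by
          apply mul_le_mul_of_nonneg_left h2 (by positivity)
      _ = 2*n * ∑ j, ((k j:ℝ)^2 + (l j:ℝ)^2) := by
          rw [← Finset.mul_sum]; ring
  -- key exponent inequality
  have hkey : (m:ℝ) ≤ Real.sqrt (2*n) / r * ‖ν - ν'‖ := by
    have hmr : (m:ℝ) * r ≤ Real.sqrt (2*n) * ‖ν - ν'‖ := by
      have hsq : ((m:ℝ) * r)^2 ≤ (Real.sqrt (2*n) * ‖ν - ν'‖)^2 := by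
        rw [mul_pow, mul_pow, Real.sq_sqrt (by positivity), hns]
        calc (m:ℝ)^2 * r^2 ≤ (2*n * ∑ j, ((k j:ℝ)^2 + (l j:ℝ)^2)) * r^2 := by
              apply mul_le_mul_of_nonneg_right hmsq (by positivity)
          _ = 2*↑n * (r^2 * ∑ j, ((k j:ℝ)^2 + (l j:ℝ)^2)) := by ring
      calc (m:ℝ) * r = Real.sqrt (((m:ℝ) * r)^2) := by
            rw [Real.sqrt_sq (by positivity)]
        _ ≤ Real.sqrt ((Real.sqrt (2*n) * ‖ν - ν'‖)^2) := Real.sqrt_le_sqrt hsq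
        _ = Real.sqrt (2*n) * ‖ν - ν'‖ := Real.sqrt_sq (by positivity)
    rw [div_mul_eq_mul_div, le_div_iff₀ hr]
    linarith
  -- the real exponent bound
  have hreal : d ^ ((m:ℕ):ℝ) ≤ (d ^ (Real.sqrt (2*n) / r)) ^ (‖ν - ν'‖ : ℝ) := by
    rw [← Real.rpow_mul hd0]
    exact Real.rpow_le_rpow_of_exponent_le hd1.le hkey
  -- conclude
  have hED : D ^ m ≤ ENNReal.ofReal (d ^ ((m:ℕ):ℝ)) := by
    calc D ^ m ≤ E ^ m := pow_le_pow_left' (le_max_left D 2) m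
      _ = ENNReal.ofReal (d ^ m) := by
          rw [← ENNReal.ofReal_toReal hEt, ← hd, ← ENNReal.ofReal_pow hd0]
      _ = ENNReal.ofReal (d ^ ((m:ℕ):ℝ)) := by rw [Real.rpow_natCast]
  calc (∫⁻ u in cube n r ν, ENNReal.ofReal (w u))
      ≤ D ^ m * ∫⁻ u in cube n r ν', ENNReal.ofReal (w u) := hchain
    _ ≤ ENNReal.ofReal (d ^ ((m:ℕ):ℝ)) * ∫⁻ u in cube n r ν', ENNReal.ofReal (w u) :=
        mul_le_mul_left hED _
    _ ≤ ENNReal.ofReal ((d ^ (Real.sqrt (2*n) / r)) ^ (‖ν - ν'‖ : ℝ)) *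
          ∫⁻ u in cube n r ν', ENNReal.ofReal (w u) :=
        mul_le_mul_left (ENNReal.ofReal_le_ofReal hreal) _


end
end

section
/- Let n ≥ 1, p > 1, r > 0, and let w be a weight on ℂⁿ belonging to A_{p,r}. Then for every δ with 0 < δ < 1 there exists ε with 0 < ε < 1 such that for every cube Q_r of side length r and every measurable set S ⊆ Q_r with v(S) ≤ δ · v(Q_r), one has w(S) ≤ ε · w(Q_r). -/
open MeasureTheory ENNReal Metric

noncomputable section

lemma coord_norm_le (n : ℕ) (x : En n) (j : Fin n) : ‖x j‖ ≤ ‖x‖ := by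
  rw [EuclideanSpace.norm_eq]
  have h : ‖x j‖ = Real.sqrt (‖x j‖ ^ 2) := (Real.sqrt_sq (norm_nonneg _)).symm
  rw [h]
  exact Real.sqrt_le_sqrt (Finset.single_le_sum (f := fun i => ‖x i‖ ^ 2)
    (fun i _ => sq_nonneg _) (Finset.mem_univ j))

lemma ball_subset_cube (n : ℕ) (r : ℝ) (z : En n) :
    ball z (r / 2) ⊆ cube n r z := by
  intro u hu j
  have h1 : ‖u - z‖ < r / 2 := by rwa [mem_ball, dist_eq_norm] at hu
  have h2 : ‖u j - z j‖ ≤ ‖u - z‖ := by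
    have := coord_norm_le n (u - z) j
    simpa using this
  constructor
  · have : |(u j - z j).re| ≤ ‖u j - z j‖ := Complex.abs_re_le_norm _
    simp only [Complex.sub_re] at this
    linarith
  · have : |(u j - z j).im| ≤ ‖u j - z j‖ := Complex.abs_im_le_norm _
    simp only [Complex.sub_im] at this
    linarith

lemma cube_isClosed (n : ℕ) (r : ℝ) (z : En n) : IsClosed (cube n r z) := by
  have : cube n r z = ⋂ j, ({u : En n | |(u j).re - (z j).re| ≤ r / 2} ∩
      {u : En n | |(u j).im - (z j).im| ≤ r / 2}) := by
    ext u; simp [cube, Set.mem_iInter, forall_and]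
  rw [this]
  refine isClosed_iInter fun j => IsClosed.inter ?_ ?_
  · have hc : Continuous fun u : En n => |(u j).re - (z j).re| := by fun_prop
    exact isClosed_le hc continuous_const
  · have hc : Continuous fun u : En n => |(u j).im - (z j).im| := by fun_prop
    exact isClosed_le hc continuous_const

lemma cube_subset_closedBall (n : ℕ) (r : ℝ) (hr : 0 ≤ r) (z : En n) :
    cube n r z ⊆ closedBall z (Real.sqrt n * r) := by
  intro u hu
  rw [mem_closedBall, dist_eq_norm, EuclideanSpace.norm_eq]
  have key : ∀ j, ‖(u - z) j‖ ^ 2 ≤ r ^ 2 := by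
    intro j
    have h1 : ‖u j - z j‖ ≤ |(u j - z j).re| + |(u j - z j).im| :=
      Complex.norm_le_abs_re_add_abs_im _
    obtain ⟨h2, h3⟩ := hu j
    simp only [Complex.sub_re, Complex.sub_im] at h1
    have h4 : ‖(u - z) j‖ ≤ r := by
      have h5 : (u - z) j = u j - z j := by simp
      rw [h5]; linarith
    exact pow_le_pow_left₀ (norm_nonneg _) h4 2
  calc Real.sqrt (∑ j, ‖(u - z) j‖ ^ 2) ≤ Real.sqrt (∑ _j : Fin n, r ^ 2) :=
        Real.sqrt_le_sqrt (Finset.sum_le_sum fun j _ => key j)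
    _ = Real.sqrt (n * r ^ 2) := by simp [Finset.sum_const, mul_comm]
    _ = Real.sqrt n * r := by
        rw [Real.sqrt_mul (Nat.cast_nonneg n), Real.sqrt_sq hr]

lemma cube_measurableSet (n : ℕ) (r : ℝ) (z : En n) : MeasurableSet (cube n r z) :=
  (cube_isClosed n r z).measurableSet

lemma volume_cube_ne_zero (n : ℕ) (r : ℝ) (hr : 0 < r) (z : En n) :
    volume (cube n r z) ≠ 0 := by
  refine fun h => absurd (measure_mono_null (ball_subset_cube n r z) h) ?_
  exact (measure_ball_pos volume z (by linarith)).ne'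

lemma volume_cube_ne_top (n : ℕ) (r : ℝ) (hr : 0 < r) (z : En n) :
    volume (cube n r z) ≠ ⊤ := by
  refine ne_top_of_le_ne_top ?_ (measure_mono (cube_subset_closedBall n r hr.le z))
  exact measure_closedBall_lt_top.ne

/-- if `w ∈ A_{p,r}` then small portions of cubes of side `r`
carry a small proportion of the weight. -/
theorem small_sets_of_Apr (n : ℕ) (hn : 1 ≤ n) (p r : ℝ) (hp : 1 < p) (hr : 0 < r)
    (w : En n → ℝ) (hw : IsWeight n w) (hApr : MemApr n p r w) :
    ∀ δ : ℝ, 0 < δ → δ < 1 → ∃ ε : ℝ, 0 < ε ∧ ε < 1 ∧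
      ∀ (z : En n) (S : Set (En n)), MeasurableSet S → S ⊆ cube n r z →
        volume S ≤ ENNReal.ofReal δ * volume (cube n r z) →
        (∫⁻ u in S, ENNReal.ofReal (w u))
          ≤ ENNReal.ofReal ε * ∫⁻ u in cube n r z, ENNReal.ofReal (w u) := by
  obtain ⟨hwm, hwpos, hwloc⟩ := hw
  obtain ⟨C, hC⟩ := hApr
  intro δ hδ0 hδ1
  have hp0 : (0:ℝ) < p := by linarith
  have hp1 : (0:ℝ) < p - 1 := by linarith
  set C' : ℝ := max C 1 with hC'def
  have hC'1 : (1:ℝ) ≤ C' := le_max_right _ _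
  have hC'0 : (0:ℝ) < C' := by linarith
  set κ : ℝ := (1 - δ) ^ p / C' with hκdef
  have h1δ : (0:ℝ) < 1 - δ := by linarith
  have hbase : (0:ℝ) < (1 - δ) ^ p := Real.rpow_pos_of_pos h1δ p
  have hκ0 : 0 < κ := div_pos hbase hC'0
  have hκ1 : κ < 1 := by
    have h1 : (1 - δ) ^ p < 1 := Real.rpow_lt_one h1δ.le (by linarith) hp0
    have h2 : κ ≤ (1 - δ) ^ p := div_le_self hbase.le hC'1
    linarith
  refine ⟨1 - κ, by linarith, by linarith, ?_⟩
  intro z S hSm hSsub hSsmall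
  set Q := cube n r z with hQdef
  set E := Q \ S with hEdef
  have hQm : MeasurableSet Q := cube_measurableSet n r z
  have hEm : MeasurableSet E := hQm.diff hSm
  have hv0 : volume Q ≠ 0 := volume_cube_ne_zero n r hr z
  have hvt : volume Q ≠ ⊤ := volume_cube_ne_top n r hr z
  have hQcomp : IsCompact Q :=
    Metric.isCompact_of_isClosed_isBounded (cube_isClosed n r z)
      ((Metric.isBounded_closedBall).subset (cube_subset_closedBall n r hr.le z))
  have hwm' : Measurable fun u : En n => ENNReal.ofReal (w u) := hwm.ennreal_ofReal
  set A := ∫⁻ u in Q, ENNReal.ofReal (w u) with hAdef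
  set σ := ∫⁻ u in Q, ENNReal.ofReal (w u ^ (-(1 / (p - 1)))) with hσdef
  set wE := ∫⁻ u in E, ENNReal.ofReal (w u) with hwEdef
  have hAt : A ≠ ⊤ :=
    (Integrable.lintegral_lt_top (hwloc.integrableOn_isCompact hQcomp)).ne
  have hA0 : A ≠ 0 := by
    intro h0
    have h1 : ∀ᵐ u ∂(volume.restrict Q), ENNReal.ofReal (w u) = 0 :=
      (lintegral_eq_zero_iff hwm').mp h0
    have h2 : ∀ᵐ u ∂(volume.restrict Q), 0 < w u := ae_restrict_of_ae hwpos
    have h3 : ∀ᵐ u ∂(volume.restrict Q), False := by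
      filter_upwards [h1, h2] with u h1 h2
      rw [ENNReal.ofReal_eq_zero] at h1; linarith
    have h4 : volume.restrict Q Set.univ = 0 := by simpa using ae_iff.mp h3
    rw [Measure.restrict_apply_univ] at h4
    exact hv0 h4
  set q : ℝ := p / (p - 1) with hqdef
  have hpq : p.HolderConjugate q := Real.HolderConjugate.conjExponent hp
  have hq0 : (0:ℝ) < q := div_pos hp0 hp1
  -- Hölder
  have hfm : Measurable fun u : En n => (ENNReal.ofReal (w u)) ^ (1/p) :=
    hwm'.pow_const _
  have hgm : Measurable fun u : En n => (ENNReal.ofReal (w u)) ^ (-(1/p)) :=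
    hwm'.pow_const _
  have holder : volume E ≤
      (∫⁻ u in E, ((ENNReal.ofReal (w u)) ^ (1/p)) ^ p) ^ (1/p) *
      (∫⁻ u in E, ((ENNReal.ofReal (w u)) ^ (-(1/p))) ^ q) ^ (1/q) := by
    have hfg : (fun u => ((fun u : En n => (ENNReal.ofReal (w u)) ^ (1/p)) *
        (fun u : En n => (ENNReal.ofReal (w u)) ^ (-(1/p)))) u)
        =ᵐ[volume.restrict E] fun _ => (1:ℝ≥0∞) := by
      filter_upwards [ae_restrict_of_ae hwpos] with u hu
      have h1 : ENNReal.ofReal (w u) ≠ 0 := by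
        simp only [ne_eq, ENNReal.ofReal_eq_zero, not_le]; linarith
      simp only [Pi.mul_apply]
      rw [← ENNReal.rpow_add _ _ h1 ENNReal.ofReal_ne_top]
      simp
    calc volume E = ∫⁻ u in E, ((fun u : En n => (ENNReal.ofReal (w u)) ^ (1/p)) *
          (fun u : En n => (ENNReal.ofReal (w u)) ^ (-(1/p)))) u :=
          ((lintegral_congr_ae hfg).trans (setLIntegral_one E)).symm
      _ ≤ _ := ENNReal.lintegral_mul_le_Lp_mul_Lq _ hpq hfm.aemeasurable hgm.aemeasurable
  have hfp : (∫⁻ u in E, ((ENNReal.ofReal (w u)) ^ (1/p)) ^ p) = wE := by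
    refine lintegral_congr fun u => ?_
    rw [← ENNReal.rpow_mul, one_div_mul_cancel hp0.ne', ENNReal.rpow_one]
  have hgq : (∫⁻ u in E, ((ENNReal.ofReal (w u)) ^ (-(1/p))) ^ q) ≤ σ := by
    have heq : (fun u : En n => ((ENNReal.ofReal (w u)) ^ (-(1/p))) ^ q)
        =ᵐ[volume.restrict E] fun u => ENNReal.ofReal (w u ^ (-(1 / (p - 1)))) := by
      filter_upwards [ae_restrict_of_ae hwpos] with u hu
      rw [← ENNReal.rpow_mul]
      have harith : (-(1/p)) * q = -(1/(p-1)) := by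
        rw [hqdef]; field_simp
      rw [harith, ENNReal.ofReal_rpow_of_pos hu]
    rw [lintegral_congr_ae heq]
    exact lintegral_mono_set Set.diff_subset
  have key : volume E ≤ wE ^ (1/p) * σ ^ (1/q) := by
    refine holder.trans ?_
    rw [hfp]
    exact mul_le_mul_right (ENNReal.rpow_le_rpow hgq (by positivity)) _
  have key2 : (volume E) ^ p ≤ wE * σ ^ (p - 1) := by
    have h1 := ENNReal.rpow_le_rpow key hp0.le
    rwa [ENNReal.mul_rpow_of_nonneg _ _ hp0.le, ← ENNReal.rpow_mul, ← ENNReal.rpow_mul,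
      one_div_mul_cancel hp0.ne', ENNReal.rpow_one,
      show (1/q) * p = p - 1 by rw [hqdef]; field_simp] at h1
  -- rearrange the A_{p,r} condition
  have hAp : A * σ ^ (p - 1) ≤ ENNReal.ofReal C' * (volume Q) ^ p := by
    have h2 : ((volume Q)⁻¹ * A) * ((volume Q)⁻¹ * σ) ^ (p-1) ≤ ENNReal.ofReal C' :=
      le_trans (hC z) (ENNReal.ofReal_le_ofReal (le_max_left _ _))
    have hv0' : (volume Q)⁻¹ ≠ 0 := ENNReal.inv_ne_zero.mpr hvt
    have hvt' : (volume Q)⁻¹ ≠ ⊤ := ENNReal.inv_ne_top.mpr hv0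
    have h3 : ((volume Q)⁻¹) ^ p * (A * σ ^ (p-1)) ≤ ENNReal.ofReal C' := by
      calc ((volume Q)⁻¹) ^ p * (A * σ ^ (p-1))
          = ((volume Q)⁻¹ * A) * ((volume Q)⁻¹ * σ) ^ (p-1) := by
            rw [ENNReal.mul_rpow_of_nonneg _ _ hp1.le,
              show p = 1 + (p-1) by ring, ENNReal.rpow_add _ _ hv0' hvt', ENNReal.rpow_one]
            ring_nf
        _ ≤ _ := h2
    calc A * σ ^ (p-1)
        = (((volume Q)⁻¹) ^ p * (A * σ ^ (p-1))) * (volume Q) ^ p := by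
          rw [mul_comm (((volume Q)⁻¹) ^ p), mul_assoc,
            ← ENNReal.mul_rpow_of_nonneg _ _ hp0.le,
            ENNReal.inv_mul_cancel hv0 hvt, ENNReal.one_rpow, mul_one]
      _ ≤ ENNReal.ofReal C' * (volume Q) ^ p := mul_le_mul_left h3 _
  -- lower bound on the volume of E
  have hvSt : volume S ≠ ⊤ := ne_top_of_le_ne_top hvt (measure_mono hSsub)
  have hsum : volume S + volume E = volume Q := by
    rw [hEdef, ← measure_union Set.disjoint_sdiff_right hEm, Set.union_diff_cancel hSsub]
  have hvE : ENNReal.ofReal (1 - δ) * volume Q ≤ volume E := by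
    have h5 : ENNReal.ofReal (1-δ) * volume Q + volume S ≤ volume E + volume S := by
      calc ENNReal.ofReal (1-δ) * volume Q + volume S
          ≤ ENNReal.ofReal (1-δ) * volume Q + ENNReal.ofReal δ * volume Q :=
            add_le_add_right hSsmall _
        _ = volume Q := by
            rw [← add_mul, ← ENNReal.ofReal_add (by linarith) hδ0.le]
            norm_num
        _ = volume E + volume S := by rw [← hsum, add_comm]
    exact (ENNReal.add_le_add_iff_right hvSt).mp h5
  -- combine
  have main : ENNReal.ofReal ((1-δ)^p) * A ≤ wE * ENNReal.ofReal C' := by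
    have h6 : (ENNReal.ofReal ((1-δ)^p) * A) * (volume Q) ^ p ≤
        (wE * ENNReal.ofReal C') * (volume Q) ^ p := by
      calc (ENNReal.ofReal ((1-δ)^p) * A) * (volume Q) ^ p
          = (ENNReal.ofReal (1-δ) * volume Q) ^ p * A := by
            rw [ENNReal.mul_rpow_of_nonneg _ _ hp0.le, ENNReal.ofReal_rpow_of_pos h1δ]
            ring
        _ ≤ (volume E) ^ p * A := mul_le_mul_left (ENNReal.rpow_le_rpow hvE hp0.le) _
        _ ≤ (wE * σ ^ (p-1)) * A := mul_le_mul_left key2 _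
        _ = wE * (A * σ ^ (p-1)) := by ring
        _ ≤ wE * (ENNReal.ofReal C' * (volume Q) ^ p) := mul_le_mul_right hAp _
        _ = (wE * ENNReal.ofReal C') * (volume Q) ^ p := by ring
    have hne0 : (volume Q) ^ p ≠ 0 :=
      (ENNReal.rpow_pos (pos_iff_ne_zero.mpr hv0) hvt).ne'
    have hnet : (volume Q) ^ p ≠ ⊤ := (ENNReal.rpow_lt_top_of_nonneg hp0.le hvt).ne
    exact (ENNReal.mul_le_mul_iff_left hne0 hnet).mp h6
  have hκE : ENNReal.ofReal κ * A ≤ wE := by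
    have h7 : (ENNReal.ofReal κ * A) * ENNReal.ofReal C' ≤ wE * ENNReal.ofReal C' := by
      calc (ENNReal.ofReal κ * A) * ENNReal.ofReal C'
          = ENNReal.ofReal (κ * C') * A := by rw [ENNReal.ofReal_mul hκ0.le]; ring
        _ = ENNReal.ofReal ((1-δ)^p) * A := by rw [hκdef, div_mul_cancel₀ _ hC'0.ne']
        _ ≤ wE * ENNReal.ofReal C' := main
    exact (ENNReal.mul_le_mul_iff_left (ENNReal.ofReal_pos.mpr hC'0).ne'
      ENNReal.ofReal_ne_top).mp h7
  have hsum2 : (∫⁻ u in S, ENNReal.ofReal (w u)) + wE = A := by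
    rw [hwEdef, hAdef, hEdef, ← lintegral_union hEm Set.disjoint_sdiff_right,
      Set.union_diff_cancel hSsub]
  have hκAt : ENNReal.ofReal κ * A ≠ ⊤ := ENNReal.mul_ne_top ENNReal.ofReal_ne_top hAt
  have hfinal : (∫⁻ u in S, ENNReal.ofReal (w u)) + ENNReal.ofReal κ * A ≤
      ENNReal.ofReal (1-κ) * A + ENNReal.ofReal κ * A := by
    calc (∫⁻ u in S, ENNReal.ofReal (w u)) + ENNReal.ofReal κ * A
        ≤ (∫⁻ u in S, ENNReal.ofReal (w u)) + wE := add_le_add_right hκE _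
      _ = A := hsum2
      _ = (ENNReal.ofReal (1-κ) + ENNReal.ofReal κ) * A := by
          rw [← ENNReal.ofReal_add (by linarith) hκ0.le]
          norm_num
      _ = _ := add_mul _ _ _
  exact (ENNReal.add_le_add_iff_right hκAt).mp hfinal

end
end

section
/- Let n ≥ 1, p > 1, q = p/(p-1), and α > 0. Let f, g : ℂⁿ → ℂ be entire functions with ∫_{ℂⁿ} |f(z)|^p e^{-(pα/2)|z|²} dv(z) < ∞ and ∫_{ℂⁿ} |g(z)|^q e^{-(qα/2)|z|²} dv(z) < ∞, and suppose that sup_{z ∈ ℂⁿ} ( (|f|^p)~^{(αp/2)}(z) )^{1/p} · ( (|g|^q)~^{(αq/2)}(z) )^{1/q} < ∞. Then the product f·g is identically constant on ℂⁿ; and if moreover f and g never vanish on ℂⁿ, then there exist a, c ∈ ℂ and b ∈ ℂⁿ such that f(z) = exp(a + Σ_j b_j z_j) and g(z) = c · exp(-(a + Σ_j b_j z_j)) for all z ∈ ℂⁿ. -/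
open MeasureTheory ENNReal Metric

noncomputable section

/-- The heat (Berezin) transform `h~^{(β)}(z) = (β/π)ⁿ ∫ e^{-β|z-u|²} h(u) dv(u)`. -/
def heatT (n : ℕ) (β : ℝ) (h : En n → ℝ≥0∞) (z : En n) : ℝ≥0∞ :=
  ENNReal.ofReal ((β / Real.pi) ^ n) *
    ∫⁻ u : En n, ENNReal.ofReal (Real.exp (-β * ‖z - u‖ ^ 2)) * h u

lemma exp_of_mul_hom {G : ℂ → ℂ} (hG : Differentiable ℂ G) (h0 : G 0 = 1)
    (hm : ∀ s t, G (s + t) = G s * G t) (t : ℂ) : G t = Complex.exp (deriv G 0 * t) := by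
  set c := deriv G 0 with hc
  have hd : ∀ x, deriv G x = c * G x := by
    intro x
    have hGx : G = fun s => G x * G (s - x) := by
      funext s
      rw [← hm x (s - x)]
      congr 1
      ring
    have hdiffin : DifferentiableAt ℂ (fun s : ℂ => G (s - x)) x :=
      DifferentiableAt.comp (g := G) (f := fun s : ℂ => s - x) x (hG (x - x))
        ((differentiableAt_id).sub_const x)
    conv_lhs => rw [hGx]
    rw [deriv_const_mul _ hdiffin]
    rw [deriv_comp_sub_const G x x, sub_self, mul_comm, ← hc]
  have hH0 : ∀ x, HasDerivAt (fun t => G t * Complex.exp (-(c * t))) 0 x := by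
    intro x
    have h1 : HasDerivAt (fun t : ℂ => -(c * t)) (-c) x := by
      simpa using ((hasDerivAt_id x).const_mul c).fun_neg
    have h2 : HasDerivAt (fun t : ℂ => Complex.exp (-(c * t)))
        (Complex.exp (-(c * x)) * -c) x := (Complex.hasDerivAt_exp _).comp x h1
    have h3 : HasDerivAt G (c * G x) x := (hd x) ▸ (hG x).hasDerivAt
    have h4 : HasDerivAt (fun t => G t * Complex.exp (-(c * t))) _ x := h3.mul h2
    convert h4 using 1
    ring
  have hdiff : Differentiable ℂ (fun t => G t * Complex.exp (-(c * t))) :=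
    fun x => (hH0 x).differentiableAt
  have hconst : G t * Complex.exp (-(c * t)) = G 0 * Complex.exp (-(c * 0)) := by
    refine is_const_of_fderiv_eq_zero (𝕜 := ℂ) hdiff (fun x => ?_) t 0
    have h := (hH0 x).hasFDerivAt.fderiv
    rw [h]
    ext
    simp
  rw [h0] at hconst
  simp only [mul_zero, neg_zero, Complex.exp_zero, one_mul, mul_one] at hconst
  have h5 : G t = Complex.exp (c * t) * (G t * Complex.exp (-(c * t))) := by
    rw [mul_comm (G t), ← mul_assoc, ← Complex.exp_add]
    simp
  rw [h5, hconst, mul_one]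

lemma ofReal_unrpow {x s : ℝ} (hx : 0 ≤ x) (hs : 0 < s) :
    (ENNReal.ofReal (x ^ s)) ^ (1/s) = ENNReal.ofReal x := by
  rw [← ENNReal.ofReal_rpow_of_nonneg hx hs.le, one_div, ENNReal.rpow_rpow_inv hs.ne']

lemma circle_submean {n : ℕ} {f : En n → ℂ} (hf : Differentiable ℂ f) (w v : En n) :
    2 * Real.pi * ‖f w‖ ≤ ∫ θ in (0:ℝ)..(2 * Real.pi), ‖f (w + circleMap 0 1 θ • v)‖ := by
  set g : ℂ → ℂ := fun ζ => f (w + ζ • v) with hg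
  have hgd : Differentiable ℂ g := hf.comp ((differentiable_id.smul_const v).const_add w)
  have hc : (∮ z in C(0, 1), (z - 0)⁻¹ • g z) = (2 * Real.pi * Complex.I) • g 0 :=
    (hgd.diffContOnCl).circleIntegral_sub_inv_smul (by simp)
  have hunfold : (∮ z in C(0, 1), (z - 0)⁻¹ • g z)
      = Complex.I * ∫ θ in (0:ℝ)..(2 * Real.pi), g (circleMap 0 1 θ) := by
    rw [circleIntegral]
    rw [← intervalIntegral.integral_const_mul]
    refine intervalIntegral.integral_congr fun θ _ => ?_
    have h0 : circleMap 0 1 θ ≠ 0 := circleMap_ne_center one_ne_zero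
    rw [deriv_circleMap]
    have h1 : circleMap 0 1 θ - 0 = circleMap 0 1 θ := by ring
    rw [h1, smul_eq_mul, smul_eq_mul]
    field_simp
  have h2 : (2 * Real.pi : ℂ) * g 0 = ∫ θ in (0:ℝ)..(2 * Real.pi), g (circleMap 0 1 θ) := by
    have h := hc.symm.trans hunfold
    rw [smul_eq_mul, mul_comm (2 * (Real.pi:ℂ)) Complex.I, mul_assoc] at h
    exact mul_left_cancel₀ Complex.I_ne_zero h
  have h3 : 2 * Real.pi * ‖g 0‖ = ‖∫ θ in (0:ℝ)..(2 * Real.pi), g (circleMap 0 1 θ)‖ := by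
    rw [← h2, norm_mul]
    congr 1
    have : (2 * Real.pi : ℂ) = ((2 * Real.pi : ℝ) : ℂ) := by push_cast; ring
    rw [this, Complex.norm_real]; exact (Real.norm_of_nonneg (by positivity)).symm
  have h4 : ‖∫ θ in (0:ℝ)..(2 * Real.pi), g (circleMap 0 1 θ)‖
      ≤ ∫ θ in (0:ℝ)..(2 * Real.pi), ‖g (circleMap 0 1 θ)‖ :=
    intervalIntegral.norm_integral_le_integral_norm (by positivity)
  have : g 0 = f w := by simp [hg]
  calc 2 * Real.pi * ‖f w‖ = 2 * Real.pi * ‖g 0‖ := by rw [this]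
    _ = _ := h3
    _ ≤ _ := h4

lemma ball_submean {n : ℕ} {f : En n → ℂ} (hf : Differentiable ℂ f) (w : En n) :
    volume (ball (0 : En n) 1) * ENNReal.ofReal ‖f w‖
      ≤ ∫⁻ u in ball w 1, ENNReal.ofReal ‖f u‖ := by
  have key : ∀ v : En n, ENNReal.ofReal (2 * Real.pi * ‖f w‖)
      ≤ ∫⁻ θ in Set.Ioc (0:ℝ) (2 * Real.pi),
          ENNReal.ofReal ‖f (w + circleMap 0 1 θ • v)‖ := by
    intro v
    have hcont : Continuous fun θ : ℝ => ‖f (w + circleMap 0 1 θ • v)‖ :=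
      (hf.continuous.comp (continuous_const.add
        ((continuous_circleMap 0 1).smul continuous_const))).norm
    have hint := circle_submean hf w v
    rw [intervalIntegral.integral_of_le (by positivity)] at hint
    calc ENNReal.ofReal (2 * Real.pi * ‖f w‖)
        ≤ ENNReal.ofReal (∫ θ in Set.Ioc (0:ℝ) (2 * Real.pi),
            ‖f (w + circleMap 0 1 θ • v)‖) := ENNReal.ofReal_le_ofReal hint
      _ = _ := ofReal_integral_eq_lintegral_ofReal (hcont.integrableOn_Ioc)
            (Filter.Eventually.of_forall fun _ => norm_nonneg _)
  have hcont2 : Continuous (Function.uncurry fun (v : En n) (θ : ℝ) =>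
      ENNReal.ofReal ‖f (w + circleMap 0 1 θ • v)‖) :=
    ENNReal.continuous_ofReal.comp (hf.continuous.comp (continuous_const.add
      (((continuous_circleMap 0 1).comp continuous_snd).smul continuous_fst))).norm
  have swap : volume (ball (0:En n) 1) * ENNReal.ofReal (2 * Real.pi * ‖f w‖)
      ≤ ∫⁻ θ in Set.Ioc (0:ℝ) (2 * Real.pi), ∫⁻ v in ball (0:En n) 1,
          ENNReal.ofReal ‖f (w + circleMap 0 1 θ • v)‖ := by
    have h1 : volume (ball (0:En n) 1) * ENNReal.ofReal (2 * Real.pi * ‖f w‖)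
        = ∫⁻ _ in ball (0:En n) 1, ENNReal.ofReal (2 * Real.pi * ‖f w‖) := by
      rw [setLIntegral_const, mul_comm]
    rw [h1]
    refine le_trans (lintegral_mono fun v => key v) ?_
    exact (lintegral_lintegral_swap hcont2.measurable.aemeasurable).le
  have rot : ∀ θ : ℝ, (∫⁻ v in ball (0:En n) 1,
        ENNReal.ofReal ‖f (w + circleMap 0 1 θ • v)‖)
      = ∫⁻ v in ball (0:En n) 1, ENNReal.ofReal ‖f (w + v)‖ := by
    intro θ
    set e : ℂ := circleMap 0 1 θ with he_def
    have he : ‖e‖ = 1 := by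
      rw [he_def]; simpa using norm_circleMap_zero 1 θ
    have he0 : e ≠ 0 := circleMap_ne_center one_ne_zero
    let T : En n ≃ₗᵢ[ℝ] En n :=
      ⟨(LinearEquiv.smulOfNeZero ℂ (En n) e he0).restrictScalars ℝ,
        fun x => by rw [show (((LinearEquiv.smulOfNeZero ℂ (En n) e he0).restrictScalars ℝ) x) = e • x from rfl, norm_smul, he, one_mul]⟩
    have hTapp : ∀ v : En n, T v = e • v := fun v => rfl
    have hpre : (⇑T) ⁻¹' (ball (0:En n) 1) = ball (0:En n) 1 := by
      ext v
      simp only [Set.mem_preimage, mem_ball_zero_iff, hTapp, norm_smul, he, one_mul]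
    have h := T.measurePreserving.setLIntegral_comp_preimage_emb
      (T.toHomeomorph.measurableEmbedding)
      (fun u => ENNReal.ofReal ‖f (w + u)‖) (ball (0:En n) 1)
    rw [hpre] at h
    simpa only [hTapp] using h
  have trans : (∫⁻ v in ball (0:En n) 1, ENNReal.ofReal ‖f (w + v)‖)
      = ∫⁻ u in ball w 1, ENNReal.ofReal ‖f u‖ := by
    have hT : MeasurePreserving (fun v : En n => w + v) volume volume :=
      measurePreserving_add_left volume w
    have hemb : MeasurableEmbedding (fun v : En n => w + v) :=
      (Homeomorph.addLeft w).measurableEmbedding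
    have hpre : (fun v : En n => w + v) ⁻¹' (ball w 1) = ball (0:En n) 1 := by
      ext v
      simp [mem_ball_iff_norm, mem_ball_zero_iff]
    have h := hT.setLIntegral_comp_preimage_emb hemb
      (fun u => ENNReal.ofReal ‖f u‖) (ball w 1)
    rw [hpre] at h
    exact h
  have hfinal : volume (ball (0:En n) 1) * ENNReal.ofReal (2 * Real.pi * ‖f w‖)
      ≤ ENNReal.ofReal (2 * Real.pi) * ∫⁻ u in ball w 1, ENNReal.ofReal ‖f u‖ := by
    refine swap.trans ?_
    have : (∫⁻ θ in Set.Ioc (0:ℝ) (2 * Real.pi), ∫⁻ v in ball (0:En n) 1,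
          ENNReal.ofReal ‖f (w + circleMap 0 1 θ • v)‖)
        = ∫⁻ _ in Set.Ioc (0:ℝ) (2 * Real.pi),
            (∫⁻ u in ball w 1, ENNReal.ofReal ‖f u‖) := by
      refine setLIntegral_congr_fun measurableSet_Ioc
        (fun θ _ => ?_)
      rw [rot θ, trans]
    rw [this, setLIntegral_const, Real.volume_Ioc, mul_comm]
    simp
  have hpi0 : ENNReal.ofReal (2 * Real.pi) ≠ 0 :=
    ne_of_gt (ENNReal.ofReal_pos.mpr (by positivity))
  rw [ENNReal.ofReal_mul (by positivity), mul_left_comm] at hfinal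
  exact (ENNReal.mul_le_mul_iff_right hpi0 ENNReal.ofReal_ne_top).mp hfinal

lemma submean_heatT {n : ℕ} (β p r : ℝ) (hβ : 0 < β) (hp : 1 < p) (hr : 0 ≤ r)
    {f : En n → ℂ} (hf : Differentiable ℂ f) :
    ∃ C : ℝ≥0∞, C ≠ 0 ∧ C ≠ ⊤ ∧ ∀ z w : En n, ‖w - z‖ ≤ r →
      ENNReal.ofReal (‖f w‖ ^ p)
        ≤ C * heatT n β (fun u => ENNReal.ofReal (‖f u‖ ^ p)) z := by
  have hp0 : (0:ℝ) < p := lt_trans one_pos hp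
  set V := volume (ball (0:En n) 1) with hV_def
  have hV0 : V ≠ 0 := (measure_ball_pos volume _ one_pos).ne'
  have hVt : V ≠ ⊤ := measure_ball_lt_top.ne
  set ε := ENNReal.ofReal (Real.exp (-β * (r+1)^2)) with hε_def
  have hε0 : ε ≠ 0 := ne_of_gt (ENNReal.ofReal_pos.mpr (Real.exp_pos _))
  have hεt : ε ≠ ⊤ := ENNReal.ofReal_ne_top
  set κ := ENNReal.ofReal ((β / Real.pi)^n) with hκ_def
  have hκ0 : κ ≠ 0 := ne_of_gt (ENNReal.ofReal_pos.mpr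
    (pow_pos (div_pos hβ Real.pi_pos) n))
  have hκt : κ ≠ ⊤ := ENNReal.ofReal_ne_top
  refine ⟨V⁻¹ * ε⁻¹ * κ⁻¹, ?_, ?_, ?_⟩
  · exact mul_ne_zero (mul_ne_zero (ENNReal.inv_ne_zero.mpr hVt)
      (ENNReal.inv_ne_zero.mpr hεt)) (ENNReal.inv_ne_zero.mpr hκt)
  · exact ENNReal.mul_ne_top (ENNReal.mul_ne_top (ENNReal.inv_ne_top.mpr hV0)
      (ENNReal.inv_ne_top.mpr hε0)) (ENNReal.inv_ne_top.mpr hκ0)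
  intro z w hzw
  set F : En n → ℝ≥0∞ := fun u => ENNReal.ofReal ‖f u‖ with hF_def
  have hFp : ∀ u, (F u) ^ p = ENNReal.ofReal (‖f u‖ ^ p) := fun u => by
    rw [hF_def, ENNReal.ofReal_rpow_of_nonneg (norm_nonneg _) hp0.le]
  set I := ∫⁻ u in ball w 1, (F u) ^ p with hI_def
  -- Step A : Hölder
  have hA : (F w) ^ p ≤ V⁻¹ * I := by
    have hball := ball_submean hf w
    set q' := p.conjExponent with hq'_def
    have hpq : p.HolderConjugate q' := Real.HolderConjugate.conjExponent hp
    have hmeas : AEMeasurable F (volume.restrict (ball w 1)) :=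
      (ENNReal.continuous_ofReal.comp hf.continuous.norm).measurable.aemeasurable
    have hH := ENNReal.lintegral_mul_le_Lp_mul_Lq (volume.restrict (ball w 1)) hpq
      hmeas (aemeasurable_const (b := (1:ℝ≥0∞)))
    simp only [Pi.mul_apply, mul_one, ENNReal.one_rpow, lintegral_const,
      Measure.restrict_apply_univ] at hH
    have hVb : volume (ball w 1) = V := Measure.addHaar_ball_center volume w 1
    rw [hVb, one_mul] at hH
    have h1 : V * F w ≤ I ^ (1/p) * V ^ (1/q') := hball.trans hH
    have h2 : (V * F w) ^ p ≤ I * V ^ (p / q') := by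
      calc (V * F w) ^ p ≤ (I ^ (1/p) * V ^ (1/q')) ^ p := ENNReal.rpow_le_rpow h1 hp0.le
        _ = (I ^ (1/p)) ^ p * (V ^ (1/q')) ^ p := ENNReal.mul_rpow_of_nonneg _ _ hp0.le
        _ = I * V ^ (p / q') := by
            rw [← ENNReal.rpow_mul, ← ENNReal.rpow_mul, one_div_mul_cancel hp0.ne',
              ENNReal.rpow_one]
            congr 1
            field_simp
    rw [ENNReal.mul_rpow_of_nonneg _ _ hp0.le] at h2
    have hq'e : p / q' = p - 1 := by
      rw [hq'_def, Real.conjExponent]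
      field_simp
    rw [hq'e] at h2
    have hVp0 : V ^ p ≠ 0 := by
      intro h
      rcases ENNReal.rpow_eq_zero_iff.mp h with ⟨h1, _⟩ | ⟨h1, h2⟩
      · exact hV0 h1
      · linarith
    have hVpt : V ^ p ≠ ⊤ := ENNReal.rpow_ne_top_of_nonneg hp0.le hVt
    calc (F w) ^ p = (V ^ p)⁻¹ * (V ^ p * (F w) ^ p) := by
          rw [← mul_assoc, ENNReal.inv_mul_cancel hVp0 hVpt, one_mul]
      _ ≤ (V ^ p)⁻¹ * (I * V ^ (p - 1)) := mul_le_mul_right h2 _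
      _ = (V ^ (-p) * V ^ (p - 1)) * I := by rw [ENNReal.rpow_neg]; ring
      _ = V⁻¹ * I := by
          rw [← ENNReal.rpow_add _ _ hV0 hVt]
          have he : -p + (p - 1) = -1 := by ring
          rw [he, ENNReal.rpow_neg_one]
  -- Step B : Gaussian lower bound on the ball
  set G : En n → ℝ≥0∞ := fun u => ENNReal.ofReal (‖f u‖ ^ p) with hG_def
  set J := ∫⁻ u : En n, ENNReal.ofReal (Real.exp (-β * ‖z - u‖ ^ 2)) * G u with hJ_def
  have hB : I ≤ ε⁻¹ * J := by
    have hpt : ∀ u ∈ ball w 1, ε * G u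
        ≤ ENNReal.ofReal (Real.exp (-β * ‖z - u‖ ^ 2)) * G u := by
      intro u hu
      refine mul_le_mul_left (ENNReal.ofReal_le_ofReal (Real.exp_le_exp.mpr ?_)) _
      have h1 : ‖z - u‖ ≤ r + 1 := by
        have : z - u = (z - w) + (w - u) := by abel
        rw [this]
        refine (norm_add_le _ _).trans (add_le_add ?_ ?_)
        · rw [norm_sub_rev]; exact hzw
        · rw [norm_sub_rev]; exact (mem_ball_iff_norm.mp hu).le
      have h2 : ‖z - u‖ ^ 2 ≤ (r + 1) ^ 2 :=
        pow_le_pow_left₀ (norm_nonneg _) h1 2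
      nlinarith
    have hmeasG : Measurable fun u : En n =>
        ENNReal.ofReal (Real.exp (-β * ‖z - u‖ ^ 2)) * G u := by
      refine Measurable.mul (f := fun u : En n => ENNReal.ofReal (Real.exp (-β * ‖z - u‖ ^ 2))) (g := G) ?_ ?_
      · exact (ENNReal.continuous_ofReal.comp ((Real.continuous_exp.comp
          ((continuous_const.mul ((continuous_const.sub continuous_id).norm.pow 2)))))).measurable
      · refine Measurable.ennreal_ofReal ?_
        have : Continuous fun u : En n => ‖f u‖ ^ p := by
          apply Continuous.rpow_const (continuous_norm.comp hf.continuous)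
          intro u; right; exact hp0.le
        exact this.measurable
    have h3 : ε * I ≤ J := by
      have h4 : ∫⁻ u in ball w 1, ε * G u
          ≤ ∫⁻ u in ball w 1, ENNReal.ofReal (Real.exp (-β * ‖z - u‖ ^ 2)) * G u :=
        setLIntegral_mono hmeasG hpt
      have h5 : ∫⁻ u in ball w 1, ε * G u = ε * I := by
        rw [hI_def, lintegral_const_mul' _ _ hεt]
        congr 1
        exact lintegral_congr fun u => (hFp u) ▸ rfl
      rw [← h5]
      exact h4.trans ((setLIntegral_le_lintegral _ _))
    calc I = ε⁻¹ * (ε * I) := by rw [← mul_assoc, ENNReal.inv_mul_cancel hε0 hεt, one_mul]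
      _ ≤ ε⁻¹ * J := mul_le_mul_right h3 _
  -- Step C : relate to heatT
  have hC : heatT n β G z = κ * J := rfl
  have hJ : J = κ⁻¹ * heatT n β G z := by
    rw [hC, ← mul_assoc, ENNReal.inv_mul_cancel hκ0 hκt, one_mul]
  calc ENNReal.ofReal (‖f w‖ ^ p) = (F w) ^ p := (hFp w).symm
    _ ≤ V⁻¹ * I := hA
    _ ≤ V⁻¹ * (ε⁻¹ * J) := mul_le_mul_right hB _
    _ = V⁻¹ * ε⁻¹ * κ⁻¹ * heatT n β G z := by rw [hJ]; ring

/-- for entire `f ∈ F_α^p`, `g ∈ F_α^q` with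
`sup_z ((|f|^p)~^{(αp/2)}(z))^{1/p} ((|g|^q)~^{(αq/2)}(z))^{1/q} < ∞`,
the product `f·g` is constant; if `f` and `g` never vanish then
`f = e^{a + Σ b_j z_j}` and `g = c e^{-(a + Σ b_j z_j)}`. -/
theorem fock_toeplitz_product (n : ℕ) (hn : 1 ≤ n) (p q α : ℝ) (hp : 1 < p)
    (hq : q = p / (p - 1)) (hα : 0 < α) (f g : En n → ℂ)
    (hf : Differentiable ℂ f) (hg : Differentiable ℂ g)
    (hfp : (∫⁻ z : En n, ENNReal.ofReal
        (‖f z‖ ^ p * Real.exp (-(p * α / 2) * ‖z‖ ^ 2))) < ⊤)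
    (hgq : (∫⁻ z : En n, ENNReal.ofReal
        (‖g z‖ ^ q * Real.exp (-(q * α / 2) * ‖z‖ ^ 2))) < ⊤)
    (hsup : ∃ M : ℝ, ∀ z : En n,
      (heatT n (α * p / 2) (fun u => ENNReal.ofReal (‖f u‖ ^ p)) z) ^ (1 / p) *
        (heatT n (α * q / 2) (fun u => ENNReal.ofReal (‖g u‖ ^ q)) z) ^ (1 / q)
        ≤ ENNReal.ofReal M) :
    (∃ c : ℂ, ∀ z : En n, f z * g z = c) ∧
      ((∀ z, f z ≠ 0) → (∀ z, g z ≠ 0) →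
        ∃ (a c : ℂ) (b : Fin n → ℂ), ∀ z : En n,
          f z = Complex.exp (a + ∑ j, b j * z j) ∧
            g z = c * Complex.exp (-(a + ∑ j, b j * z j))) := by
  obtain ⟨M, hM⟩ := hsup
  have hp0 : (0:ℝ) < p := one_pos.trans hp
  have hq1 : 1 < q := by
    rw [hq, lt_div_iff₀ (by linarith)]
    linarith
  have hq0 : (0:ℝ) < q := one_pos.trans hq1
  have hβf : (0:ℝ) < α * p / 2 := by positivity
  have hβg : (0:ℝ) < α * q / 2 := by positivity
  set Hf : En n → ℝ≥0∞ :=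
    heatT n (α * p / 2) (fun u => ENNReal.ofReal (‖f u‖ ^ p)) with hHf_def
  set Hg : En n → ℝ≥0∞ :=
    heatT n (α * q / 2) (fun u => ENNReal.ofReal (‖g u‖ ^ q)) with hHg_def
  obtain ⟨Cf, hCf0, hCft, hCf⟩ := submean_heatT (α*p/2) p 0 hβf hp le_rfl hf
  obtain ⟨Cg, hCg0, hCgt, hCg⟩ := submean_heatT (α*q/2) q 0 hβg hq1 le_rfl hg
  -- pointwise bound for f*g
  have hbound : ∀ z, ENNReal.ofReal ‖f z * g z‖
      ≤ Cf ^ (1/p) * Cg ^ (1/q) * ENNReal.ofReal M := by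
    intro z
    have h1 : ENNReal.ofReal (‖f z‖ ^ p) ≤ Cf * Hf z :=
      hCf z z (by simp)
    have h2 : ENNReal.ofReal (‖g z‖ ^ q) ≤ Cg * Hg z :=
      hCg z z (by simp)
    have e1 : ENNReal.ofReal ‖f z * g z‖
        = (ENNReal.ofReal (‖f z‖ ^ p)) ^ (1/p)
          * (ENNReal.ofReal (‖g z‖ ^ q)) ^ (1/q) := by
      rw [ofReal_unrpow (norm_nonneg _) hp0, ofReal_unrpow (norm_nonneg _) hq0,
        norm_mul, ENNReal.ofReal_mul (norm_nonneg _)]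
    rw [e1]
    calc (ENNReal.ofReal (‖f z‖ ^ p)) ^ (1/p)
          * (ENNReal.ofReal (‖g z‖ ^ q)) ^ (1/q)
        ≤ (Cf * Hf z) ^ (1/p) * (Cg * Hg z) ^ (1/q) :=
          mul_le_mul' (ENNReal.rpow_le_rpow h1 (by positivity))
            (ENNReal.rpow_le_rpow h2 (by positivity))
      _ = (Cf ^ (1/p) * Cg ^ (1/q)) * (Hf z ^ (1/p) * Hg z ^ (1/q)) := by
          rw [ENNReal.mul_rpow_of_nonneg _ _ (by positivity : (0:ℝ) ≤ 1/p),
            ENNReal.mul_rpow_of_nonneg _ _ (by positivity : (0:ℝ) ≤ 1/q)]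
          ring
      _ ≤ Cf ^ (1/p) * Cg ^ (1/q) * ENNReal.ofReal M := mul_le_mul_right (hM z) _
  set Bd := Cf ^ (1/p) * Cg ^ (1/q) * ENNReal.ofReal M with hBd_def
  have hBdt : Bd ≠ ⊤ :=
    ENNReal.mul_ne_top (ENNReal.mul_ne_top (ENNReal.rpow_ne_top_of_nonneg (by positivity) hCft)
      (ENNReal.rpow_ne_top_of_nonneg (by positivity) hCgt)) ENNReal.ofReal_ne_top
  have hreal : ∀ z, ‖f z * g z‖ ≤ Bd.toReal := by
    intro z
    calc ‖f z * g z‖ = (ENNReal.ofReal ‖f z * g z‖).toReal :=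
          (ENNReal.toReal_ofReal (norm_nonneg _)).symm
      _ ≤ Bd.toReal := ENNReal.toReal_mono hBdt (hbound z)
  have hfgd : Differentiable ℂ (fun z => f z * g z) := hf.mul hg
  have hbdd : Bornology.IsBounded (Set.range fun z => f z * g z) := by
    refine Bornology.IsBounded.subset (isBounded_closedBall (x := (0:ℂ)) (r := Bd.toReal)) ?_
    rintro _ ⟨z, rfl⟩
    exact mem_closedBall_zero_iff.mpr (hreal z)
  have hconst : ∀ z, f z * g z = f 0 * g 0 := fun z =>
    hfgd.apply_eq_apply_of_bounded hbdd z 0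
  refine ⟨⟨f 0 * g 0, hconst⟩, ?_⟩
  intro hf0 hg0
  set c := f 0 * g 0 with hc_def
  have hc0 : c ≠ 0 := mul_ne_zero (hf0 0) (hg0 0)
  -- Harnack-type inequality
  have harnack : ∀ v : En n, ∃ K : ℝ, ∀ z : En n, ‖f (z + v)‖ ≤ K * ‖f z‖ := by
    intro v
    obtain ⟨Cv, hCv0, hCvt, hCv⟩ := submean_heatT (α*p/2) p ‖v‖ hβf hp (norm_nonneg v) hf
    set K := Cv ^ (1/p) * (ENNReal.ofReal M * (Cg ^ (1/q)
      * (ENNReal.ofReal (‖f 0 * g 0‖) )⁻¹)) with hK_def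
    have hKt : K ≠ ⊤ := by
      refine ENNReal.mul_ne_top (ENNReal.rpow_ne_top_of_nonneg (by positivity) hCvt)
        (ENNReal.mul_ne_top ENNReal.ofReal_ne_top (ENNReal.mul_ne_top
          (ENNReal.rpow_ne_top_of_nonneg (by positivity) hCgt) ?_))
      rw [Ne, ENNReal.inv_eq_top]
      exact ne_of_gt (ENNReal.ofReal_pos.mpr (by
        simpa [hc_def] using (norm_pos_iff.mpr hc0)))
    refine ⟨K.toReal, fun z => ?_⟩
    have hfz0 : ENNReal.ofReal ‖f z‖ ≠ 0 :=
      ne_of_gt (ENNReal.ofReal_pos.mpr (norm_pos_iff.mpr (hf0 z)))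
    have hfzt : ENNReal.ofReal ‖f z‖ ≠ ⊤ := ENNReal.ofReal_ne_top
    have hgz0 : ENNReal.ofReal ‖g z‖ ≠ 0 :=
      ne_of_gt (ENNReal.ofReal_pos.mpr (norm_pos_iff.mpr (hg0 z)))
    have hgzt : ENNReal.ofReal ‖g z‖ ≠ ⊤ := ENNReal.ofReal_ne_top
    -- step 1 : ofReal ‖f (z+v)‖ ≤ Cv^{1/p} * Hf z^{1/p}
    have h1 : ENNReal.ofReal ‖f (z + v)‖ ≤ Cv ^ (1/p) * (Hf z) ^ (1/p) := by
      have := hCv z (z + v) (by simp)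
      calc ENNReal.ofReal ‖f (z + v)‖
          = (ENNReal.ofReal (‖f (z + v)‖ ^ p)) ^ (1/p) := by
            rw [ofReal_unrpow (norm_nonneg _) hp0]
        _ ≤ (Cv * Hf z) ^ (1/p) := ENNReal.rpow_le_rpow this (by positivity)
        _ = Cv ^ (1/p) * (Hf z) ^ (1/p) :=
            ENNReal.mul_rpow_of_nonneg _ _ (by positivity)
    -- step 2 : (Cg^{1/q})⁻¹ * ofReal ‖g z‖ ≤ Hg z^{1/q}
    have h2 : (Cg ^ (1/q))⁻¹ * ENNReal.ofReal ‖g z‖ ≤ (Hg z) ^ (1/q) := by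
      have h2' : ENNReal.ofReal (‖g z‖ ^ q) ≤ Cg * Hg z := hCg z z (by simp)
      have h2'' : Cg⁻¹ * ENNReal.ofReal (‖g z‖ ^ q) ≤ Hg z := by
        calc Cg⁻¹ * ENNReal.ofReal (‖g z‖ ^ q)
            ≤ Cg⁻¹ * (Cg * Hg z) := mul_le_mul_right h2' _
          _ = Hg z := by rw [← mul_assoc, ENNReal.inv_mul_cancel hCg0 hCgt, one_mul]
      calc (Cg ^ (1/q))⁻¹ * ENNReal.ofReal ‖g z‖
          = (Cg⁻¹ * ENNReal.ofReal (‖g z‖ ^ q)) ^ (1/q) := by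
            rw [ENNReal.mul_rpow_of_nonneg _ _ (by positivity : (0:ℝ) ≤ 1/q),
              ENNReal.inv_rpow, ofReal_unrpow (norm_nonneg _) hq0]
        _ ≤ (Hg z) ^ (1/q) := ENNReal.rpow_le_rpow h2'' (by positivity)
    -- step 3 : Hf z^{1/p} ≤ ofReal M * (Cg^{1/q} * (ofReal ‖g z‖)⁻¹)
    have h3 : (Hf z) ^ (1/p) ≤ ENNReal.ofReal M * (Cg ^ (1/q) * (ENNReal.ofReal ‖g z‖)⁻¹) := by
      have hY0 : (Cg ^ (1/q))⁻¹ * ENNReal.ofReal ‖g z‖ ≠ 0 :=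
        mul_ne_zero (ENNReal.inv_ne_zero.mpr
          (ENNReal.rpow_ne_top_of_nonneg (by positivity) hCgt)) hgz0
      have hYt : (Cg ^ (1/q))⁻¹ * ENNReal.ofReal ‖g z‖ ≠ ⊤ := by
        refine ENNReal.mul_ne_top ?_ hgzt
        rw [Ne, ENNReal.inv_eq_top]
        intro h
        exact hCg0 (by simpa [ENNReal.rpow_eq_zero_iff, hq0.le] using
          ENNReal.rpow_eq_zero_iff.mp h |>.elim (fun ⟨h1, _⟩ => h1) (fun ⟨h1, h2⟩ => by
            exfalso; exact absurd h1 hCgt))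
      have hprod : (Hf z) ^ (1/p) * ((Cg ^ (1/q))⁻¹ * ENNReal.ofReal ‖g z‖)
          ≤ ENNReal.ofReal M :=
        le_trans (mul_le_mul_right h2 _) (hM z)
      have := (ENNReal.le_div_iff_mul_le (Or.inl hY0) (Or.inl hYt)).mpr hprod
      refine this.trans ?_
      rw [div_eq_mul_inv, ENNReal.mul_inv (Or.inr hgzt) (Or.inr hgz0), inv_inv]
    -- step 4 : (ofReal ‖g z‖)⁻¹ = ofReal ‖f z‖ * (ofReal |c|)⁻¹
    have h4 : (ENNReal.ofReal ‖g z‖)⁻¹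
        = ENNReal.ofReal ‖f z‖ * (ENNReal.ofReal (‖f 0 * g 0‖))⁻¹ := by
      have habs : ENNReal.ofReal (‖f 0 * g 0‖)
          = ENNReal.ofReal ‖f z‖ * ENNReal.ofReal ‖g z‖ := by
        rw [← ENNReal.ofReal_mul (norm_nonneg _), ← norm_mul, hconst z]
      rw [habs, ENNReal.mul_inv (Or.inl hfz0) (Or.inl hfzt), ← mul_assoc,
        ENNReal.mul_inv_cancel hfz0 hfzt, one_mul]
    -- combine
    have h5 : ENNReal.ofReal ‖f (z + v)‖ ≤ K * ENNReal.ofReal ‖f z‖ := by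
      calc ENNReal.ofReal ‖f (z + v)‖ ≤ Cv ^ (1/p) * (Hf z) ^ (1/p) := h1
        _ ≤ Cv ^ (1/p) * (ENNReal.ofReal M * (Cg ^ (1/q) * (ENNReal.ofReal ‖g z‖)⁻¹)) :=
            mul_le_mul_right h3 _
        _ = K * ENNReal.ofReal ‖f z‖ := by rw [h4, hK_def]; ring
    calc ‖f (z + v)‖ = (ENNReal.ofReal ‖f (z + v)‖).toReal :=
          (ENNReal.toReal_ofReal (norm_nonneg _)).symm
      _ ≤ (K * ENNReal.ofReal ‖f z‖).toReal := ENNReal.toReal_mono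
            (ENNReal.mul_ne_top hKt hfzt) h5
      _ = K.toReal * ‖f z‖ := by
          rw [ENNReal.toReal_mul, ENNReal.toReal_ofReal (norm_nonneg _)]
  -- functional equation via Liouville
  have hfun : ∀ v z : En n, f (z + v) * f 0 = f v * f z := by
    intro v z
    obtain ⟨K, hK⟩ := harnack v
    set Fv := fun z : En n => f (z + v) / f z with hFv_def
    have hnum : Differentiable ℂ fun z : En n => f (z + v) :=
      hf.comp (differentiable_id.add_const v)
    have hFvd : Differentiable ℂ Fv := by
      rw [hFv_def]
      simp only [div_eq_mul_inv]
      exact hnum.mul (hf.inv hf0)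
    have hFvb : Bornology.IsBounded (Set.range Fv) := by
      refine Bornology.IsBounded.subset (isBounded_closedBall (x := (0:ℂ)) (r := K)) ?_
      rintro _ ⟨u, rfl⟩
      rw [mem_closedBall_zero_iff, hFv_def]
      simp only [norm_div]
      rw [div_le_iff₀ (norm_pos_iff.mpr (hf0 u))]
      exact hK u
    have heq : Fv z = Fv 0 := hFvd.apply_eq_apply_of_bounded hFvb z 0
    rw [hFv_def] at heq
    simp only [zero_add] at heq
    rw [div_eq_div_iff (hf0 z) (hf0 0)] at heq
    linear_combination heq
  -- multiplicative structure
  set ψ := fun z : En n => f z / f 0 with hψ_def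
  have hψd : Differentiable ℂ ψ := by
    rw [hψ_def]
    simp only [div_eq_mul_inv]
    exact hf.mul_const _
  have hψ0 : ψ 0 = 1 := div_self (hf0 0)
  have hψm : ∀ z v : En n, ψ (z + v) = ψ z * ψ v := by
    intro z v
    rw [hψ_def]
    simp only
    rw [div_mul_div_comm, div_eq_div_iff (hf0 0) (mul_ne_zero (hf0 0) (hf0 0))]
    have := hfun v z
    linear_combination f 0 * this
  set L := fderiv ℂ ψ 0 with hL_def
  have hexp : ∀ z, ψ z = Complex.exp (L z) := by
    intro z
    set G := fun t : ℂ => ψ (t • z) with hG_def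
    have hGd : Differentiable ℂ G := hψd.comp (differentiable_id.smul_const z)
    have hG0 : G 0 = 1 := by
      rw [hG_def]; simp only [zero_smul]; exact hψ0
    have hGm : ∀ s t : ℂ, G (s + t) = G s * G t := by
      intro s t
      rw [hG_def]
      simp only [add_smul]
      exact hψm _ _
    have h1 := exp_of_mul_hom hGd hG0 hGm 1
    have hderiv : deriv G 0 = L z := by
      set m : ℂ →L[ℂ] En n :=
        ContinuousLinearMap.smulRight (ContinuousLinearMap.id ℂ ℂ) z with hm_def
      have hm : HasFDerivAt (fun t : ℂ => t • z) m 0 := by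
        have := m.hasFDerivAt (x := (0:ℂ))
        convert this using 2
        simp [hm_def]
      have hψf : HasFDerivAt ψ L ((0:ℂ) • z) := by
        rw [zero_smul, hL_def]; exact (hψd 0).hasFDerivAt
      have hcomp := hψf.comp (0:ℂ) hm
      have hd2 := hcomp.hasDerivAt.deriv
      have h2 : G = ψ ∘ fun t : ℂ => t • z := rfl
      rw [h2, hd2]
      simp [hm_def]
    rw [hderiv, mul_one] at h1
    have h3 : G 1 = ψ z := by rw [hG_def]; simp
    rw [← h3, h1]
  -- basis expansion
  set b : Fin n → ℂ := fun j => L (EuclideanSpace.single j (1:ℂ)) with hb_def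
  have hLsum : ∀ z : En n, L z = ∑ j, b j * z j := by
    intro z
    have hz : z = ∑ j, z j • EuclideanSpace.single j (1:ℂ) := by
      ext i
      rw [WithLp.ofLp_sum, Finset.sum_apply]
      simp [EuclideanSpace.single_apply]
    calc L z = L (∑ j, z j • EuclideanSpace.single j (1:ℂ)) := by rw [← hz]
      _ = ∑ j, z j • L (EuclideanSpace.single j (1:ℂ)) := by
          rw [map_sum]
          exact Finset.sum_congr rfl fun j _ => by rw [L.map_smul]
      _ = ∑ j, b j * z j := Finset.sum_congr rfl fun j _ => by
          rw [hb_def, smul_eq_mul, mul_comm]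
  refine ⟨Complex.log (f 0), c, b, fun z => ?_⟩
  have hfz : f z = Complex.exp (Complex.log (f 0) + ∑ j, b j * z j) := by
    rw [Complex.exp_add, Complex.exp_log (hf0 0), ← hLsum z, ← hexp z, hψ_def]
    simp only
    rw [mul_comm, div_mul_eq_mul_div, mul_div_assoc, div_self (hf0 0), mul_one]
  refine ⟨hfz, ?_⟩
  have h := hconst z
  rw [Complex.exp_neg, ← hfz, ← div_eq_mul_inv, eq_div_iff (hf0 z)]
  linear_combination h

end
end
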